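/- arXiv:2507.10168 — 2 statements merged into one kernel-verified Lean document; each statement's English description precedes it below -/
import Mathlib

section
/- Let S and T be left cancellative monoids and let S × T be their direct product monoid. Then S × T is strongly C*-regular on the boundary if and only if both S and T are strongly C*-regular on the boundary. -/
open scoped Classical

namespace SgC

variable {M : Type*}

/-- Composition of partial maps (`g` after `f`). -/
def pcomp (g f : M → Option M) : M → Option M := fun s => (f s).bind g

/-- The canonical partial inverse of a partial map (the genuine inverse when the map
is injective on its domain, as is the case for all maps in the left inverse hull of a
left cancellative monoid). -/
noncomputable def pinv (f : M → Option M) : M → Option M :=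
  fun t => if h : ∃ s, f s = some t then some h.choose else none

/-- Left translation `t ↦ s * t` as an everywhere-defined partial map. -/
def ptransl [Mul M] (s : M) : M → Option M := fun t => some (s * t)

/-- The identity partial map. -/
def pid : M → Option M := fun s => some s

/-- The block `q⁻¹ ∘ p`: first multiply on the left by `p`, then remove `q` on the left. -/
noncomputable def pblock [Mul M] (p : M × M) : M → Option M :=
  pcomp (pinv (ptransl p.2)) (ptransl p.1)

/-- Membership in the left inverse hull `I_ℓ(M)`: `h` is of the form
`s₂ₙ⁻¹ s₂ₙ₋₁ ⋯ s₂⁻¹ s₁` for some `n ≥ 1` and `sᵢ ∈ M` (the list records the pairs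
`(s₁,s₂), (s₃,s₄), …`, applied left to right). -/
def InInvHull [Mul M] (h : M → Option M) : Prop :=
  ∃ l : List (M × M), l ≠ [] ∧
    h = l.foldl (fun acc p => pcomp (pblock p) acc) pid

/-- Membership in the inverse hull generated by translations by elements of `σ` only
(used for canonical copies of `I_ℓ(S)` inside partial maps of a larger monoid). -/
def InInvHullOn [Mul M] (σ : Set M) (h : M → Option M) : Prop :=
  ∃ l : List (M × M), l ≠ [] ∧ (∀ p ∈ l, p.1 ∈ σ ∧ p.2 ∈ σ) ∧
    h = l.foldl (fun acc p => pcomp (pblock p) acc) pid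

/-- Domain of a partial map. -/
def pdom (h : M → Option M) : Set M := {s | h s ≠ none}

/-- `h` fixes the set `Y` pointwise (in particular `Y ⊆ dom h`). -/
def PFixes (h : M → Option M) (Y : Set M) : Prop := ∀ s ∈ Y, h s = some s

/-- Preimage of a set under a partial map. -/
def ppre (h : M → Option M) (X : Set M) : Set M := {s | ∃ x ∈ X, h s = some x}

/-- Constructible right ideals: domains of elements of the left inverse hull. -/
def IsConstructible [Mul M] (X : Set M) : Prop := ∃ h, InInvHull h ∧ X = pdom h

/-- Membership in `J̄(S)`: sets of the form `X₀` or `X₀ ∖ (X₁ ∪ ⋯ ∪ Xₘ)` with all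
`Xᵢ` constructible. -/
def IsConstructibleBar [Mul M] (X : Set M) : Prop :=
  ∃ (X₀ : Set M) (m : ℕ) (Xi : Fin m → Set M),
    IsConstructible X₀ ∧ (∀ i, IsConstructible (Xi i)) ∧ X = X₀ \ ⋃ i, Xi i

/-- `Xi` is a foundation family for `X`: each `Xi i ⊆ X` and every nonempty
constructible right ideal contained in `X` intersects some `Xi i`. -/
def IsFoundation [Mul M] (X : Set M) {ι : Type*} (Xi : ι → Set M) : Prop :=
  (∀ i, Xi i ⊆ X) ∧
  ∀ Y : Set M, IsConstructible Y → Y.Nonempty → Y ⊆ X → ∃ i, (Y ∩ Xi i).Nonempty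

/-- Strong C*-regularity. -/
def StronglyRegular (M : Type*) [Monoid M] : Prop :=
  ∀ (n : ℕ) (h : Fin n → M → Option M), (∀ k, InInvHull (h k)) →
  ∀ (m : ℕ) (X : Set M) (Xi : Fin m → Set M),
    IsConstructible X → (∀ i, IsConstructible (Xi i)) →
    (X \ ⋃ i, Xi i).Nonempty →
    (X \ ⋃ i, Xi i) ⊆ ⋃ k, {s | h k s = some s} →
    ∃ (l : ℕ) (Y : Fin l → Set M) (kk : Fin l → Fin n),
      (∀ j, IsConstructible (Y j)) ∧
      (X \ ⋃ i, Xi i) ⊆ ⋃ j, Y j ∧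
      ∀ j, PFixes (h (kk j)) (Y j)

/-- C*-regularity. -/
def Regular (M : Type*) [Monoid M] : Prop :=
  ∀ (n : ℕ) (h : Fin n → M → Option M), (∀ k, InInvHull (h k)) →
  ∀ X : Set M, IsConstructibleBar X → X.Nonempty →
    X ⊆ ⋃ k, {s | h k s = some s} →
    ∃ (l : ℕ) (Y : Fin l → Set M) (kk : Fin l → Fin n),
      (∀ j, IsConstructibleBar (Y j)) ∧ X ⊆ ⋃ j, Y j ∧
      ∀ j, PFixes (h (kk j)) (Y j)

/-- Strong C*-regularity on the boundary. -/
def StronglyRegularOnBoundary (M : Type*) [Monoid M] : Prop :=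
  ∀ (n : ℕ) (h : Fin n → M → Option M), (∀ k, InInvHull (h k)) →
  ∀ (m : ℕ) (X : Set M) (Xi : Fin m → Set M),
    IsConstructible X → (∀ i, IsConstructible (Xi i)) → (∀ i, Xi i ⊆ X) →
    (X \ ⋃ i, Xi i).Nonempty →
    (X \ ⋃ i, Xi i) ⊆ ⋃ k, {s | h k s = some s} →
    ∃ (l : ℕ) (Y : Fin l → Set M) (kk : Fin l → Fin n),
      (∀ j, IsConstructible (Y j)) ∧ (∀ j, PFixes (h (kk j)) (Y j)) ∧
      IsFoundation X (Sum.elim Xi Y)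

/-- C*-regularity on the boundary. -/
def RegularOnBoundary (M : Type*) [Monoid M] : Prop :=
  ∀ (n : ℕ) (h : Fin n → M → Option M), (∀ k, InInvHull (h k)) →
  ∀ (m : ℕ) (X : Set M) (Xi : Fin m → Set M),
    IsConstructible X → (∀ i, IsConstructible (Xi i)) → (∀ i, Xi i ⊆ X) →
    (X \ ⋃ i, Xi i).Nonempty →
    (X \ ⋃ i, Xi i) ⊆ ⋃ k, {s | h k s = some s} →
    ∃ (l : ℕ) (Y : Fin l → Set M) (kk : Fin l → Fin n),
      (∀ j, IsConstructibleBar (Y j)) ∧ (∀ j, PFixes (h (kk j)) (Y j)) ∧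
      IsFoundation X (Sum.elim Xi Y)

/-- The type of constructible right ideals `J(M)`. -/
def CIdeal (M : Type*) [Mul M] : Type _ := {X : Set M // IsConstructible X}

/-- The character space `{0,1}^{J(M)}` with the topology of pointwise convergence. -/
abbrev CharSpace (M : Type*) [Mul M] : Type _ := CIdeal M → Bool

/-- The principal character `χ_s`. -/
noncomputable def princhar [Mul M] (s : M) : CharSpace M :=
  fun X => decide (s ∈ X.1)

/-- `Ω(M)`: the closure of the set of principal characters. -/
noncomputable def Omega (M : Type*) [Mul M] : Set (CharSpace M) :=
  closure (Set.range (princhar : M → CharSpace M))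

/-- Filters on `J(M)`: nonempty collections of nonempty constructible ideals closed
under intersections and enlargements within `J(M)`. -/
def IsFilterOn [Mul M] (F : Set (CIdeal M)) : Prop :=
  F.Nonempty ∧ (∀ X ∈ F, (X.1 : Set M).Nonempty) ∧
  (∀ X ∈ F, ∀ Y ∈ F, ∀ Z : CIdeal M, Z.1 = X.1 ∩ Y.1 → Z ∈ F) ∧
  (∀ X ∈ F, ∀ Y : CIdeal M, X.1 ⊆ Y.1 → Y ∈ F)

/-- Nonzero multiplicative `{0,1}`-valued maps on `J(M)`. -/
def IsChar [Mul M] (χ : CharSpace M) : Prop :=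
  (∃ X, χ X = true) ∧
  ∀ X Y Z : CIdeal M, Z.1 = X.1 ∩ Y.1 → χ Z = (χ X && χ Y)

/-- Maximal characters: characters whose associated filter is maximal among filters. -/
def IsMaximalChar [Mul M] (χ : CharSpace M) : Prop :=
  IsChar χ ∧ IsFilterOn {X | χ X = true} ∧
  ∀ G : Set (CIdeal M), IsFilterOn G → {X | χ X = true} ⊆ G → G = {X | χ X = true}

/-- The set of maximal characters `Ω_max(M)`. -/
def OmegaMax (M : Type*) [Mul M] : Set (CharSpace M) := {χ | IsMaximalChar χ}

/-- The boundary `∂Ω(M)`: the closure of the set of maximal characters. -/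
noncomputable def BoundaryOmega (M : Type*) [Mul M] : Set (CharSpace M) :=
  closure (OmegaMax M)


/-! ### Auxiliary material for the proof of Statement 6 -/

section Aux

/-- Sequential composition of a list of blocks (same fold as in `InInvHull`). -/
noncomputable def seqF [Mul M] (l : List (M × M)) : M → Option M :=
  l.foldl (fun acc p => pcomp (pblock p) acc) pid

theorem pcomp_assoc (h g f : M → Option M) :
    pcomp h (pcomp g f) = pcomp (pcomp h g) f := by
  funext s
  simp only [pcomp, Option.bind_assoc]
  rfl

theorem pcomp_pid (f : M → Option M) : pcomp f pid = f := rfl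

theorem pid_pcomp (f : M → Option M) : pcomp pid f = f := by
  funext s
  cases h : f s <;> simp [pcomp, h, pid]

theorem pcomp_eq_some {g f : M → Option M} {s t : M} :
    pcomp g f s = some t ↔ ∃ u, f s = some u ∧ g u = some t := by
  cases h : f s <;> simp [pcomp, h]

section Cancel

variable [Monoid M] [IsLeftCancelMul M]

theorem pinv_ptransl {s t u : M} : pinv (ptransl s) t = some u ↔ s * u = t := by
  unfold pinv
  split
  · rename_i hex
    have hch := hex.choose_spec
    simp only [ptransl, Option.some.injEq] at hch ⊢
    constructor
    · rintro rfl; exact hch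
    · intro h; exact mul_left_cancel (hch.trans h.symm)
  · rename_i hex
    simp only [ptransl, Option.some.injEq] at hex
    constructor
    · intro h; cases h
    · intro h; exact absurd ⟨u, h⟩ hex

theorem pblock_eq_some {p : M × M} {a c : M} :
    pblock p a = some c ↔ p.2 * c = p.1 * a := by
  show pcomp (pinv (ptransl p.2)) (ptransl p.1) a = some c ↔ _
  rw [pcomp_eq_some]
  constructor
  · rintro ⟨u, hu, hc⟩
    simp only [ptransl, Option.some.injEq] at hu
    subst hu
    exact pinv_ptransl.mp hc
  · intro h
    exact ⟨p.1 * a, rfl, pinv_ptransl.mpr h⟩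

theorem pblock_one (a : M) : pblock ((1 : M), (1 : M)) a = some a :=
  pblock_eq_some.mpr rfl

theorem pblock_one_eq_pid : pblock ((1 : M), (1 : M)) = (pid : M → Option M) := by
  funext a; exact pblock_one a

/-- Injectivity (on domains) of partial maps. -/
def PInj (f : M → Option M) : Prop :=
  ∀ ⦃s s' t : M⦄, f s = some t → f s' = some t → s = s'

theorem pinj_pblock (p : M × M) : PInj (pblock p) := by
  intro s s' t hs hs'
  rw [pblock_eq_some] at hs hs'
  exact mul_left_cancel (hs.symm.trans hs')

theorem pinj_pid : PInj (pid : M → Option M) := by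
  intro s s' t hs hs'
  simp only [pid, Option.some.injEq] at hs hs'
  rw [hs, hs']

theorem pinj_pcomp {g f : M → Option M} (hg : PInj g) (hf : PInj f) :
    PInj (pcomp g f) := by
  intro s s' t hs hs'
  rw [pcomp_eq_some] at hs hs'
  obtain ⟨u, hu, hut⟩ := hs
  obtain ⟨u', hu', hut'⟩ := hs'
  have : u = u' := hg hut hut'
  subst this
  exact hf hu hu'

theorem seqF_nil : seqF ([] : List (M × M)) = pid := rfl

theorem foldl_pcomp (l : List (M × M)) (acc : M → Option M) :
    l.foldl (fun acc p => pcomp (pblock p) acc) acc = pcomp (seqF l) acc := by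
  induction l generalizing acc with
  | nil => simp [seqF, pid_pcomp]
  | cons p l ih =>
    show l.foldl _ (pcomp (pblock p) acc) = _
    rw [ih]
    have : seqF (p :: l) = pcomp (seqF l) (pblock p) := by
      show l.foldl _ (pcomp (pblock p) pid) = _
      rw [ih (pcomp (pblock p) pid), pcomp_pid]
    rw [this, ← pcomp_assoc]

theorem seqF_cons (p : M × M) (l : List (M × M)) :
    seqF (p :: l) = pcomp (seqF l) (pblock p) := by
  show l.foldl _ (pcomp (pblock p) pid) = _
  rw [foldl_pcomp, pcomp_pid]

theorem seqF_append (l₁ l₂ : List (M × M)) :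
    seqF (l₁ ++ l₂) = pcomp (seqF l₂) (seqF l₁) := by
  unfold seqF
  rw [List.foldl_append]
  exact foldl_pcomp l₂ _

theorem seqF_singleton (p : M × M) : seqF [p] = pblock p := by
  rw [seqF_cons, seqF_nil, pid_pcomp]

theorem pinj_seqF (l : List (M × M)) : PInj (seqF l) := by
  induction l with
  | nil => rw [seqF_nil]; exact pinj_pid
  | cons p l ih => rw [seqF_cons]; exact pinj_pcomp ih (pinj_pblock p)

theorem pinv_eq_some_of {f : M → Option M} {t s : M} (h : pinv f t = some s) :
    f s = some t := by
  unfold pinv at h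
  split at h
  · rename_i hex
    have := hex.choose_spec
    cases h
    exact this
  · cases h

theorem pinv_eq_some_iff {f : M → Option M} (hf : PInj f) {t s : M} :
    pinv f t = some s ↔ f s = some t := by
  constructor
  · exact pinv_eq_some_of
  · intro h
    unfold pinv
    split
    · rename_i hex
      have := hex.choose_spec
      exact congrArg some (hf this h)
    · rename_i hex
      exact absurd ⟨s, h⟩ hex

theorem pblock_swap {p : M × M} {a c : M} :
    pblock (p.2, p.1) c = some a ↔ pblock p a = some c := by
  rw [pblock_eq_some, pblock_eq_some]
  exact eq_comm

/-- Reversal of a block list computes the inverse. -/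
theorem seqF_rev_char (l : List (M × M)) (s t : M) :
    seqF l s = some t ↔ seqF ((l.map (fun p => (p.2, p.1))).reverse) t = some s := by
  induction l generalizing s t with
  | nil => simp [seqF_nil, pid, eq_comm]
  | cons p l ih =>
    rw [seqF_cons, pcomp_eq_some]
    have : ((p :: l).map (fun p => (p.2, p.1))).reverse
        = ((l.map (fun p => (p.2, p.1))).reverse) ++ [(p.2, p.1)] := by
      simp
    rw [this, seqF_append, pcomp_eq_some, seqF_singleton]
    constructor
    · rintro ⟨u, hu, hut⟩
      exact ⟨u, (ih u t).mp hut, pblock_swap.mpr hu⟩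
    · rintro ⟨u, hu, hut⟩
      exact ⟨u, pblock_swap.mp hut, (ih u t).mpr hu⟩

theorem pinv_seqF (l : List (M × M)) :
    pinv (seqF l) = seqF ((l.map (fun p => (p.2, p.1))).reverse) := by
  funext t
  cases h : seqF ((l.map (fun p => (p.2, p.1))).reverse) t with
  | none =>
    cases h2 : pinv (seqF l) t with
    | none => rfl
    | some s =>
      have := pinv_eq_some_of h2
      rw [seqF_rev_char] at this
      rw [this] at h
      cases h
  | some s =>
    exact (pinv_eq_some_iff (pinj_seqF l)).mpr ((seqF_rev_char l s t).mpr h)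

theorem inInvHull_iff {h : M → Option M} :
    InInvHull h ↔ ∃ l : List (M × M), l ≠ [] ∧ h = seqF l := Iff.rfl

theorem InInvHull.pcompc {g f : M → Option M} (hg : InInvHull g) (hf : InInvHull f) :
    InInvHull (pcomp g f) := by
  rw [inInvHull_iff] at *
  obtain ⟨lg, hlg, rfl⟩ := hg
  obtain ⟨lf, hlf, rfl⟩ := hf
  exact ⟨lf ++ lg, by simp [hlf], (seqF_append lf lg).symm⟩

theorem InInvHull.pinvc {f : M → Option M} (hf : InInvHull f) : InInvHull (pinv f) := by
  rw [inInvHull_iff] at hf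
  obtain ⟨l, hl, rfl⟩ := hf
  rw [inInvHull_iff]
  refine ⟨(l.map (fun p => (p.2, p.1))).reverse, ?_, pinv_seqF l⟩
  simp [hl]

theorem inInvHull_pid : InInvHull (pid : M → Option M) := by
  rw [inInvHull_iff]
  exact ⟨[((1 : M), (1 : M))], by simp, by rw [seqF_singleton, pblock_one_eq_pid]⟩

theorem pinj_of_inInvHull {f : M → Option M} (hf : InInvHull f) : PInj f := by
  obtain ⟨l, -, rfl⟩ := hf
  exact pinj_seqF l

/-- Every constructible ideal carries a partial identity in the hull. -/
theorem exists_pident {X : Set M} (hX : IsConstructible X) :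
    ∃ e : M → Option M, InInvHull e ∧ ∀ x, e x = if x ∈ X then some x else none := by
  obtain ⟨h, hh, rfl⟩ := hX
  refine ⟨pcomp (pinv h) h, (hh.pinvc).pcompc hh, fun x => ?_⟩
  by_cases hx : x ∈ pdom h
  · simp only [pdom, Set.mem_setOf_eq] at hx
    cases hhx : h x with
    | none => exact absurd hhx hx
    | some y =>
      have : pinv h y = some x := (pinv_eq_some_iff (pinj_of_inInvHull hh)).mpr hhx
      simp [pcomp, hhx, this, hx, Set.mem_setOf_eq, pdom]
  · simp only [pdom, Set.mem_setOf_eq, not_not] at hx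
    simp [pcomp, hx, pdom, Set.mem_setOf_eq]

theorem IsConstructible.inter {X Y : Set M} (hX : IsConstructible X)
    (hY : IsConstructible Y) : IsConstructible (X ∩ Y) := by
  obtain ⟨eX, heX, heXv⟩ := exists_pident hX
  obtain ⟨eY, heY, heYv⟩ := exists_pident hY
  refine ⟨pcomp eY eX, heY.pcompc heX, ?_⟩
  ext x
  simp only [pdom, Set.mem_setOf_eq, pcomp, Set.mem_inter_iff]
  constructor
  · rintro ⟨hx, hy⟩
    rw [heXv, if_pos hx]
    simp only [Option.bind_some]
    rw [heYv, if_pos hy]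
    simp
  · intro hne
    by_cases hx : x ∈ X
    · rw [heXv, if_pos hx] at hne
      simp only [Option.bind_some] at hne
      by_cases hy : x ∈ Y
      · exact ⟨hx, hy⟩
      · rw [heYv, if_neg hy] at hne; exact absurd rfl hne
    · rw [heXv, if_neg hx] at hne
      exact absurd rfl hne

theorem seqF_replicate_one (r : ℕ) :
    seqF (List.replicate r ((1 : M), (1 : M))) = (pid : M → Option M) := by
  induction r with
  | zero => rfl
  | succ r ih =>
    rw [List.replicate_succ, seqF_cons, ih, pblock_one_eq_pid, pid_pcomp]

theorem seqF_pad (l : List (M × M)) (r : ℕ) :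
    seqF (l ++ List.replicate r ((1 : M), (1 : M))) = seqF l := by
  rw [seqF_append, seqF_replicate_one, pid_pcomp]

end Cancel

section ProdAux

variable {S T : Type*} [Monoid S] [Monoid T] [IsLeftCancelMul S] [IsLeftCancelMul T]

/-- Componentwise product of partial maps. -/
def pprod (f : S → Option S) (g : T → Option T) : S × T → Option (S × T) :=
  fun x => (f x.1).bind fun c => (g x.2).map fun d => (c, d)

theorem pprod_eq_some {f : S → Option S} {g : T → Option T} {x y : S × T} :
    pprod f g x = some y ↔ f x.1 = some y.1 ∧ g x.2 = some y.2 := by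
  cases hf : f x.1 <;> cases hg : g x.2 <;>
    simp [pprod, hf, hg, Prod.ext_iff, eq_comm, and_comm]

theorem pprod_eq_none {f : S → Option S} {g : T → Option T} {x : S × T} :
    pprod f g x = none ↔ f x.1 = none ∨ g x.2 = none := by
  cases hf : f x.1 <;> cases hg : g x.2 <;> simp [pprod, hf, hg]

theorem pid_prod : (pid : S × T → Option (S × T)) = pprod pid pid := by
  funext x; simp [pid, pprod]

theorem pcomp_pprod (f f' : S → Option S) (g g' : T → Option T) :
    pcomp (pprod f g) (pprod f' g') = pprod (pcomp f f') (pcomp g g') := by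
  funext x
  cases hf : f' x.1 <;> cases hg : g' x.2 <;> simp [pprod, pcomp, hf, hg]

theorem pblock_prod (p : (S × T) × (S × T)) :
    pblock p = pprod (pblock (p.1.1, p.2.1)) (pblock (p.1.2, p.2.2)) := by
  funext x
  cases h1 : pblock (p.1.1, p.2.1) x.1 with
  | none =>
    have : pblock p x = none := by
      cases h : pblock p x with
      | none => rfl
      | some y =>
        have hy := pblock_eq_some.mp h
        have : pblock (p.1.1, p.2.1) x.1 = some y.1 :=
          pblock_eq_some.mpr (congrArg Prod.fst hy)
        rw [h1] at this; cases this
    rw [this]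
    symm
    rw [pprod_eq_none]
    exact Or.inl h1
  | some c =>
    cases h2 : pblock (p.1.2, p.2.2) x.2 with
    | none =>
      have : pblock p x = none := by
        cases h : pblock p x with
        | none => rfl
        | some y =>
          have hy := pblock_eq_some.mp h
          have : pblock (p.1.2, p.2.2) x.2 = some y.2 :=
            pblock_eq_some.mpr (congrArg Prod.snd hy)
          rw [h2] at this; cases this
      rw [this]
      symm
      rw [pprod_eq_none]
      exact Or.inr h2
    | some d =>
      have : pblock p x = some (c, d) := by
        rw [pblock_eq_some]
        have hc := pblock_eq_some.mp h1
        have hd := pblock_eq_some.mp h2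
        exact Prod.ext hc hd
      rw [this]
      symm
      rw [pprod_eq_some]
      exact ⟨h1, h2⟩

theorem seqF_prod (l : List ((S × T) × (S × T))) :
    seqF l = pprod (seqF (l.map fun p => (p.1.1, p.2.1)))
      (seqF (l.map fun p => (p.1.2, p.2.2))) := by
  induction l with
  | nil => simp only [seqF_nil, List.map_nil]; exact pid_prod
  | cons p l ih =>
    simp only [List.map_cons, seqF_cons, ih, pblock_prod p, pcomp_pprod]

theorem zipWith_map_fst : ∀ (l₁ : List (S × S)) (l₂ : List (T × T)),
    l₁.length = l₂.length →
    (List.zipWith (fun p q => ((p.1, q.1), (p.2, q.2))) l₁ l₂).map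
      (fun p => (p.1.1, p.2.1)) = l₁
  | [], [], _ => rfl
  | [], _ :: _, h => by cases h
  | _ :: _, [], h => by cases h
  | p :: l₁, q :: l₂, h => by
    simp only [List.zipWith_cons_cons, List.map_cons, List.cons.injEq]
    exact ⟨trivial, zipWith_map_fst l₁ l₂ (by simpa using h)⟩

theorem zipWith_map_snd : ∀ (l₁ : List (S × S)) (l₂ : List (T × T)),
    l₁.length = l₂.length →
    (List.zipWith (fun p q => ((p.1, q.1), (p.2, q.2))) l₁ l₂).map
      (fun p => (p.1.2, p.2.2)) = l₂
  | [], [], _ => rfl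
  | [], _ :: _, h => by cases h
  | _ :: _, [], h => by cases h
  | p :: l₁, q :: l₂, h => by
    simp only [List.zipWith_cons_cons, List.map_cons, List.cons.injEq]
    exact ⟨trivial, zipWith_map_snd l₁ l₂ (by simpa using h)⟩

theorem inInvHull_pprod {f : S → Option S} {g : T → Option T}
    (hf : InInvHull f) (hg : InInvHull g) : InInvHull (pprod f g) := by
  rw [inInvHull_iff] at *
  obtain ⟨lf, hlf, rfl⟩ := hf
  obtain ⟨lg, hlg, rfl⟩ := hg
  set N := max lf.length lg.length with hN
  set lf' := lf ++ List.replicate (N - lf.length) ((1 : S), (1 : S)) with hlf'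
  set lg' := lg ++ List.replicate (N - lg.length) ((1 : T), (1 : T)) with hlg'
  have hflen : lf'.length = N := by
    simp only [hlf', List.length_append, List.length_replicate]
    omega
  have hglen : lg'.length = N := by
    simp only [hlg', List.length_append, List.length_replicate]
    omega
  refine ⟨List.zipWith (fun p q => ((p.1, q.1), (p.2, q.2))) lf' lg', ?_, ?_⟩
  · intro hnil
    have := congrArg List.length hnil
    simp only [List.length_zipWith, hflen, hglen, List.length_nil] at this
    have hl : 0 < lf.length := List.length_pos_iff.mpr hlf
    omega
  · rw [seqF_prod, zipWith_map_fst _ _ (hflen.trans hglen.symm),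
      zipWith_map_snd _ _ (hflen.trans hglen.symm), hlf', hlg', seqF_pad, seqF_pad]

theorem inInvHull_prod_decomp {h : S × T → Option (S × T)} (hh : InInvHull h) :
    ∃ f g, InInvHull f ∧ InInvHull g ∧ h = pprod f g := by
  rw [inInvHull_iff] at hh
  obtain ⟨l, hl, rfl⟩ := hh
  refine ⟨seqF (l.map fun p => (p.1.1, p.2.1)), seqF (l.map fun p => (p.1.2, p.2.2)),
    ?_, ?_, seqF_prod l⟩
  · rw [inInvHull_iff]
    exact ⟨_, by simpa using hl, rfl⟩
  · rw [inInvHull_iff]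
    exact ⟨_, by simpa using hl, rfl⟩

theorem pdom_pprod (f : S → Option S) (g : T → Option T) :
    pdom (pprod f g) = (pdom f) ×ˢ (pdom g) := by
  ext x
  simp only [pdom, Set.mem_setOf_eq, Set.mem_prod]
  rw [← not_or, not_iff_not]
  exact pprod_eq_none

theorem IsConstructible.sprod {A : Set S} {B : Set T}
    (hA : IsConstructible A) (hB : IsConstructible B) : IsConstructible (A ×ˢ B) := by
  obtain ⟨f, hf, rfl⟩ := hA
  obtain ⟨g, hg, rfl⟩ := hB
  exact ⟨pprod f g, inInvHull_pprod hf hg, (pdom_pprod f g).symm⟩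

theorem isConstructible_prod_decomp {X : Set (S × T)} (hX : IsConstructible X) :
    ∃ A B, IsConstructible A ∧ IsConstructible B ∧ X = A ×ˢ B := by
  obtain ⟨h, hh, rfl⟩ := hX
  obtain ⟨f, g, hf, hg, rfl⟩ := inInvHull_prod_decomp hh
  exact ⟨pdom f, pdom g, ⟨f, hf, rfl⟩, ⟨g, hg, rfl⟩, pdom_pprod f g⟩

theorem pfixes_pprod {f : S → Option S} {g : T → Option T} {A : Set S} {B : Set T}
    (hf : PFixes f A) (hg : PFixes g B) : PFixes (pprod f g) (A ×ˢ B) := by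
  rintro ⟨a, b⟩ ⟨ha, hb⟩
  exact pprod_eq_some.mpr ⟨hf a ha, hg b hb⟩

theorem pfixes_fst {f : S → Option S} {g : T → Option T} {A : Set S} {B : Set T}
    (h : PFixes (pprod f g) (A ×ˢ B)) (hB : B.Nonempty) : PFixes f A := by
  intro a ha
  obtain ⟨b, hb⟩ := hB
  exact (pprod_eq_some.mp (h (a, b) ⟨ha, hb⟩)).1

theorem pfixes_snd {f : S → Option S} {g : T → Option T} {A : Set S} {B : Set T}
    (h : PFixes (pprod f g) (A ×ˢ B)) (hA : A.Nonempty) : PFixes g B := by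
  intro b hb
  obtain ⟨a, ha⟩ := hA
  exact (pprod_eq_some.mp (h (a, b) ⟨ha, hb⟩)).2

end ProdAux

section FilterAux

variable [Monoid M] [IsLeftCancelMul M]

/-- Filters of nonempty constructible right ideals. -/
def IsIF (F : Set (Set M)) : Prop :=
  F.Nonempty ∧ (∀ C ∈ F, IsConstructible C ∧ C.Nonempty) ∧
    (∀ C ∈ F, ∀ D : Set M, IsConstructible D → C ⊆ D → D ∈ F) ∧
    (∀ C ∈ F, ∀ D ∈ F, C ∩ D ∈ F)

/-- Maximal filters of nonempty constructible right ideals. -/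
def IsMaxIF (F : Set (Set M)) : Prop :=
  IsIF F ∧ ∀ G, IsIF G → F ⊆ G → G = F

theorem exists_maxIF {C₀ : Set M} (hcon : IsConstructible C₀) (hne : C₀.Nonempty) :
    ∃ F, IsMaxIF F ∧ C₀ ∈ F := by
  set 𝒮 : Set (Set (Set M)) := {F | IsIF F ∧ C₀ ∈ F} with h𝒮
  have hbase : ({D : Set M | IsConstructible D ∧ C₀ ⊆ D}) ∈ 𝒮 := by
    refine ⟨⟨⟨C₀, hcon, subset_rfl⟩, ?_, ?_, ?_⟩, hcon, subset_rfl⟩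
    · rintro C ⟨hC, hsub⟩
      exact ⟨hC, hne.mono hsub⟩
    · rintro C ⟨hC, hsub⟩ D hD hCD
      exact ⟨hD, hsub.trans hCD⟩
    · rintro C ⟨hC, hsub⟩ D ⟨hD, hsub'⟩
      exact ⟨hC.inter hD, Set.subset_inter hsub hsub'⟩
  have hchainub : ∀ c ⊆ 𝒮, IsChain (· ⊆ ·) c → c.Nonempty →
      ∃ ub ∈ 𝒮, ∀ s ∈ c, s ⊆ ub := by
    intro c hc hchain hcne
    refine ⟨⋃₀ c, ⟨⟨?_, ?_, ?_, ?_⟩, ?_⟩, fun s hs => Set.subset_sUnion_of_mem hs⟩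
    · obtain ⟨F, hF⟩ := hcne
      obtain ⟨C, hC⟩ := (hc hF).1.1
      exact ⟨C, Set.mem_sUnion_of_mem hC hF⟩
    · rintro C ⟨F, hF, hCF⟩
      exact (hc hF).1.2.1 C hCF
    · rintro C ⟨F, hF, hCF⟩ D hD hCD
      exact ⟨F, hF, (hc hF).1.2.2.1 C hCF D hD hCD⟩
    · rintro C ⟨F, hF, hCF⟩ D ⟨G, hG, hDG⟩
      rcases hchain.total hF hG with h | h
      · exact ⟨G, hG, (hc hG).1.2.2.2 C (h hCF) D hDG⟩
      · exact ⟨F, hF, (hc hF).1.2.2.2 C hCF D (h hDG)⟩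
    · obtain ⟨F, hF⟩ := hcne
      exact ⟨F, hF, (hc hF).2⟩
  obtain ⟨m, hsub, hmax⟩ := zorn_subset_nonempty 𝒮 hchainub _ hbase
  refine ⟨m, ⟨hmax.prop.1, fun G hG hmG => ?_⟩, hsub ⟨hcon, subset_rfl⟩⟩
  have : m ≤ G := hmG
  exact le_antisymm (hmax.le_of_ge ⟨hG, hmG hmax.prop.2⟩ this) this

theorem maxIF_mem_of_meets {F : Set (Set M)} (hF : IsMaxIF F) {D : Set M}
    (hD : IsConstructible D) (hmeet : ∀ Y ∈ F, (Y ∩ D).Nonempty) : D ∈ F := by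
  set G : Set (Set M) := {Z | IsConstructible Z ∧ ∃ Y ∈ F, Y ∩ D ⊆ Z} with hGdef
  obtain ⟨⟨Fne, Fmem, Fup, Finter⟩, Fmax⟩ := hF
  have hFG : F ⊆ G := fun Y hY =>
    ⟨(Fmem Y hY).1, Y, hY, Set.inter_subset_left⟩
  have hG : IsIF G := by
    refine ⟨Fne.mono hFG, ?_, ?_, ?_⟩
    · rintro C ⟨hC, Y, hY, hYC⟩
      exact ⟨hC, (hmeet Y hY).mono hYC⟩
    · rintro C ⟨hC, Y, hY, hYC⟩ Z hZ hCZ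
      exact ⟨hZ, Y, hY, hYC.trans hCZ⟩
    · rintro C ⟨hC, Y, hY, hYC⟩ C' ⟨hC', Y', hY', hYC'⟩
      refine ⟨hC.inter hC', Y ∩ Y', Finter Y hY Y' hY', ?_⟩
      rintro x ⟨⟨hxY, hxY'⟩, hxD⟩
      exact ⟨hYC ⟨hxY, hxD⟩, hYC' ⟨hxY', hxD⟩⟩
  have : G = F := Fmax G hG hFG
  rw [← this]
  obtain ⟨Y, hY⟩ := Fne
  exact ⟨hD, Y, hY, Set.inter_subset_right⟩

theorem maxIF_avoid {F : Set (Set M)} (hF : IsMaxIF F) {D : Set M}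
    (hD : IsConstructible D) (hnmem : D ∉ F) : ∃ Y ∈ F, Y ∩ D = ∅ := by
  by_contra h
  push_neg at h
  exact hnmem (maxIF_mem_of_meets hF hD h)

theorem IF_finset_inter {F : Set (Set M)} (hF : IsIF F) {X : Set M} (hX : X ∈ F)
    {ι : Type*} {Y : ι → Set M} (hY : ∀ i, Y i ∈ F) (s : Finset ι) :
    (X ∩ ⋂ i ∈ s, Y i) ∈ F := by
  classical
  induction s using Finset.induction_on with
  | empty => simpa using hX
  | insert _ _ hnotmem ih =>
    rename_i a s
    have : (X ∩ ⋂ i ∈ insert a s, Y i) = (X ∩ ⋂ i ∈ s, Y i) ∩ Y a := by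
      simp only [Finset.mem_insert, Set.iInter_iInter_eq_or_left]
      ext x
      simp only [Set.mem_inter_iff, Set.mem_iInter]
      tauto
    rw [this]
    exact hF.2.2.2 _ ih _ (hY a)

theorem maxIF_foundation_hit {F : Set (Set M)} (hF : IsMaxIF F) {X : Set M}
    (hX : X ∈ F) {ι : Type*} [Fintype ι] {memb : ι → Set M}
    (hcon : ∀ i, IsConstructible (memb i)) (hfnd : IsFoundation X memb) :
    ∃ i, memb i ∈ F := by
  by_contra h
  push_neg at h
  have havoid : ∀ i, ∃ Y ∈ F, Y ∩ memb i = ∅ := fun i =>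
    maxIF_avoid hF (hcon i) (h i)
  choose Y hYF hYdisj using havoid
  have hYstar : (X ∩ ⋂ i ∈ (Finset.univ : Finset ι), Y i) ∈ F :=
    IF_finset_inter hF.1 hX hYF Finset.univ
  set Ystar := X ∩ ⋂ i ∈ (Finset.univ : Finset ι), Y i with hYs
  have hprops := hF.1.2.1 Ystar hYstar
  obtain ⟨i, hi⟩ := hfnd.2 Ystar hprops.1 hprops.2 Set.inter_subset_left
  obtain ⟨x, hx1, hx2⟩ := hi
  have hxY : x ∈ Y i := by
    have := hx1.2
    simp only [Finset.mem_univ, Set.iInter_true, Set.mem_iInter] at this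
    exact this i
  have : x ∈ Y i ∩ memb i := ⟨hxY, hx2⟩
  rw [hYdisj i] at this
  exact this

theorem foundation_of_cover {X : Set M} {ι : Type*} {memb : ι → Set M}
    (hsub : ∀ i, memb i ⊆ X) (hcov : X ⊆ ⋃ i, memb i) : IsFoundation X memb := by
  refine ⟨hsub, fun Y _ hne hYX => ?_⟩
  obtain ⟨y, hy⟩ := hne
  obtain ⟨i, hi⟩ := Set.mem_iUnion.mp (hcov (hYX hy))
  exact ⟨i, y, hy, hi⟩

/-- Limits of maximal filters along an ultrafilter. -/
def IsLimChar (χ : Set M → Prop) : Prop :=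
  ∃ (ι : Type*) (𝒰 : Ultrafilter ι) (𝔉 : ι → Set (Set M)),
    (∀ P, IsMaxIF (𝔉 P)) ∧ ∀ C, χ C ↔ {P | C ∈ 𝔉 P} ∈ 𝒰

theorem IsLimChar.nonempty {χ : Set M → Prop} (hχ : IsLimChar χ) {C : Set M}
    (hC : χ C) : C.Nonempty := by
  obtain ⟨ι, 𝒰, 𝔉, hmax, hiff⟩ := hχ
  obtain ⟨P, hP⟩ := Filter.nonempty_of_mem ((hiff C).mp hC)
  exact ((hmax P).1.2.1 C hP).2

theorem IsLimChar.hit {χ : Set M → Prop} (hχ : IsLimChar χ) {X : Set M}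
    (hX : χ X) {ι' : Type*} [Fintype ι'] {memb : ι' → Set M}
    (hcon : ∀ i, IsConstructible (memb i)) (hfnd : IsFoundation X memb) :
    ∃ i, χ (memb i) := by
  obtain ⟨ι, 𝒰, 𝔉, hmax, hiff⟩ := hχ
  by_contra h
  push_neg at h
  have hne : ∀ i, {P | memb i ∈ 𝔉 P}ᶜ ∈ 𝒰 := fun i =>
    (Ultrafilter.compl_mem_iff_notMem).mpr (fun hmem => h i ((hiff _).mpr hmem))
  have hU : {P | X ∈ 𝔉 P} ∈ 𝒰 := (hiff X).mp hX
  have hint : (⋂ i, {P | memb i ∈ 𝔉 P}ᶜ) ∈ 𝒰 := Filter.iInter_mem.mpr hne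
  obtain ⟨P, hP1, hP2⟩ := Filter.nonempty_of_mem (Filter.inter_mem hU hint)
  obtain ⟨i, hi⟩ := maxIF_foundation_hit (hmax P) hP1 hcon hfnd
  have := Set.mem_iInter.mp hP2 i
  exact this hi

/-- Main consequence of strong boundary regularity: limit characters hit a fixed
constructible ideal or one of the given ones. -/
theorem srb_limchar (hreg : StronglyRegularOnBoundary M) {χ : Set M → Prop}
    (hχ : IsLimChar χ) {n m : ℕ} {f : Fin n → M → Option M}
    (hf : ∀ k, InInvHull (f k)) {X : Set M} {Xi : Fin m → Set M}
    (hX : IsConstructible X) (hXi : ∀ i, IsConstructible (Xi i))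
    (hsub : ∀ i, Xi i ⊆ X)
    (hcov : X \ ⋃ i, Xi i ⊆ ⋃ k, {s | f k s = some s}) (hχX : χ X) :
    (∃ i, χ (Xi i)) ∨ ∃ k C, IsConstructible C ∧ C ⊆ X ∧ PFixes (f k) C ∧ χ C := by
  by_cases hne : (X \ ⋃ i, Xi i).Nonempty
  · obtain ⟨l, Y, kk, hYcon, hYfix, hfnd⟩ :=
      hreg n f hf m X Xi hX hXi hsub hne hcov
    have hcon' : ∀ i : Fin m ⊕ Fin l, IsConstructible (Sum.elim Xi Y i) := by
      rintro (i | j)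
      · exact hXi i
      · exact hYcon j
    obtain ⟨i, hi⟩ := hχ.hit hχX hcon' hfnd
    cases i with
    | inl i => exact Or.inl ⟨i, hi⟩
    | inr j => exact Or.inr ⟨kk j, Y j, hYcon j, hfnd.1 (Sum.inr j), hYfix j, hi⟩
  · have hcov' : X ⊆ ⋃ i, Xi i := by
      intro x hx
      by_contra hnx
      exact hne ⟨x, hx, hnx⟩
    obtain ⟨i, hi⟩ := hχ.hit hχX hXi (foundation_of_cover hsub hcov')
    exact Or.inl ⟨i, hi⟩

theorem isConstructible_univ [Monoid M] [IsLeftCancelMul M] :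
    IsConstructible (Set.univ : Set M) :=
  ⟨pid, inInvHull_pid, by ext x; simp [pdom, pid]⟩

end FilterAux

section Forward

variable {S T : Type*} [Monoid S] [Monoid T] [IsLeftCancelMul S] [IsLeftCancelMul T]

theorem srb_prod_fst (hST : StronglyRegularOnBoundary (S × T)) :
    StronglyRegularOnBoundary S := by
  classical
  intro n h hh m X Xi hX hXi hsub hne hcov
  set H : Fin n → (S × T) → Option (S × T) := fun k => pprod (h k) pid with hH
  have hHhull : ∀ k, InInvHull (H k) := fun k => inInvHull_pprod (hh k) inInvHull_pid
  set X' : Set (S × T) := X ×ˢ (Set.univ : Set T) with hX'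
  set Xi' : Fin m → Set (S × T) := fun i => Xi i ×ˢ (Set.univ : Set T) with hXi'
  have hX'c : IsConstructible X' := hX.sprod isConstructible_univ
  have hXi'c : ∀ i, IsConstructible (Xi' i) := fun i =>
    (hXi i).sprod isConstructible_univ
  have hsub' : ∀ i, Xi' i ⊆ X' := fun i => Set.prod_mono (hsub i) subset_rfl
  have hne' : (X' \ ⋃ i, Xi' i).Nonempty := by
    obtain ⟨a, ha, hna⟩ := hne
    refine ⟨(a, 1), ⟨ha, trivial⟩, fun hmem => hna ?_⟩
    obtain ⟨i, hi⟩ := Set.mem_iUnion.mp hmem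
    exact Set.mem_iUnion.mpr ⟨i, hi.1⟩
  have hcov' : X' \ ⋃ i, Xi' i ⊆ ⋃ k, {x | H k x = some x} := by
    rintro ⟨a, b⟩ ⟨⟨haX, -⟩, hnot⟩
    have haD : a ∈ X \ ⋃ i, Xi i := by
      refine ⟨haX, fun hm => hnot ?_⟩
      obtain ⟨i, hi⟩ := Set.mem_iUnion.mp hm
      exact Set.mem_iUnion.mpr ⟨i, hi, trivial⟩
    obtain ⟨k, hk⟩ := Set.mem_iUnion.mp (hcov haD)
    exact Set.mem_iUnion.mpr ⟨k, pprod_eq_some.mpr ⟨hk, rfl⟩⟩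
  obtain ⟨l, Y, kk, hYcon, hYfix, hfnd⟩ :=
    hST n H hHhull m X' Xi' hX'c hXi'c hsub' hne' hcov'
  choose C D hC hD hCD using fun j => isConstructible_prod_decomp (hYcon j)
  set gs : Finset (Fin l) := Finset.univ.filter (fun j => (D j).Nonempty) with hgs
  have hgsne : ∀ j ∈ gs, (D j).Nonempty := fun j hj => (Finset.mem_filter.mp hj).2
  set l' := gs.card with hl'
  have hce : Fintype.card ↥gs = gs.card := Fintype.card_coe gs
  set e : ↥gs ≃ Fin l' := (Fintype.equivFin ↥gs).trans (finCongr hce) with he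
  set Y' : Fin l' → Set S := fun j' => C ((e.symm j') : ↥gs).1 with hY'
  set kk' : Fin l' → Fin n := fun j' => kk ((e.symm j') : ↥gs).1 with hkk'
  have hCsubX : ∀ j, (D j).Nonempty → C j ⊆ X := by
    intro j hDj a haC
    obtain ⟨b, hb⟩ := hDj
    have := hfnd.1 (Sum.inr j)
    simp only [Sum.elim_inr] at this
    rw [hCD j] at this
    exact (this (Set.mk_mem_prod haC hb)).1
  refine ⟨l', Y', kk', fun j' => hC _, ?_, ?_, ?_⟩
  · intro j'
    have hj := ((e.symm j') : ↥gs).2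
    have hfix := hYfix ((e.symm j') : ↥gs).1
    rw [hCD] at hfix
    exact pfixes_fst hfix (hgsne _ hj)
  · rintro (i | j')
    · exact hsub i
    · exact hCsubX _ (hgsne _ ((e.symm j') : ↥gs).2)
  · intro Y₀ hY₀c hY₀ne hY₀X
    obtain ⟨y, hy⟩ := hY₀ne
    obtain ⟨idx, x, hx1, hx2⟩ := hfnd.2 (Y₀ ×ˢ (Set.univ : Set T))
      (hY₀c.sprod isConstructible_univ) ⟨(y, 1), hy, trivial⟩
      (Set.prod_mono hY₀X subset_rfl)
    cases idx with
    | inl i =>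
      simp only [Sum.elim_inl] at hx2
      exact ⟨Sum.inl i, x.1, hx1.1, hx2.1⟩
    | inr j =>
      simp only [Sum.elim_inr] at hx2
      rw [hCD j] at hx2
      have hjgs : j ∈ gs := Finset.mem_filter.mpr ⟨Finset.mem_univ j, ⟨x.2, hx2.2⟩⟩
      refine ⟨Sum.inr (e ⟨j, hjgs⟩), x.1, hx1.1, ?_⟩
      show x.1 ∈ Y' (e ⟨j, hjgs⟩)
      rw [hY']
      simp only [Equiv.symm_apply_apply]
      exact hx2.1

theorem srb_prod_snd (hST : StronglyRegularOnBoundary (S × T)) :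
    StronglyRegularOnBoundary T := by
  classical
  intro n h hh m X Xi hX hXi hsub hne hcov
  set H : Fin n → (S × T) → Option (S × T) := fun k => pprod pid (h k) with hH
  have hHhull : ∀ k, InInvHull (H k) := fun k => inInvHull_pprod inInvHull_pid (hh k)
  set X' : Set (S × T) := (Set.univ : Set S) ×ˢ X with hX'
  set Xi' : Fin m → Set (S × T) := fun i => (Set.univ : Set S) ×ˢ Xi i with hXi'
  have hX'c : IsConstructible X' := isConstructible_univ.sprod hX
  have hXi'c : ∀ i, IsConstructible (Xi' i) := fun i =>
    isConstructible_univ.sprod (hXi i)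
  have hsub' : ∀ i, Xi' i ⊆ X' := fun i => Set.prod_mono subset_rfl (hsub i)
  have hne' : (X' \ ⋃ i, Xi' i).Nonempty := by
    obtain ⟨a, ha, hna⟩ := hne
    refine ⟨(1, a), ⟨trivial, ha⟩, fun hmem => hna ?_⟩
    obtain ⟨i, hi⟩ := Set.mem_iUnion.mp hmem
    exact Set.mem_iUnion.mpr ⟨i, hi.2⟩
  have hcov' : X' \ ⋃ i, Xi' i ⊆ ⋃ k, {x | H k x = some x} := by
    rintro ⟨b, a⟩ ⟨⟨-, haX⟩, hnot⟩
    have haD : a ∈ X \ ⋃ i, Xi i := by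
      refine ⟨haX, fun hm => hnot ?_⟩
      obtain ⟨i, hi⟩ := Set.mem_iUnion.mp hm
      exact Set.mem_iUnion.mpr ⟨i, trivial, hi⟩
    obtain ⟨k, hk⟩ := Set.mem_iUnion.mp (hcov haD)
    exact Set.mem_iUnion.mpr ⟨k, pprod_eq_some.mpr ⟨rfl, hk⟩⟩
  obtain ⟨l, Y, kk, hYcon, hYfix, hfnd⟩ :=
    hST n H hHhull m X' Xi' hX'c hXi'c hsub' hne' hcov'
  choose C D hC hD hCD using fun j => isConstructible_prod_decomp (hYcon j)
  set gs : Finset (Fin l) := Finset.univ.filter (fun j => (C j).Nonempty) with hgs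
  have hgsne : ∀ j ∈ gs, (C j).Nonempty := fun j hj => (Finset.mem_filter.mp hj).2
  set l' := gs.card with hl'
  have hce : Fintype.card ↥gs = gs.card := Fintype.card_coe gs
  set e : ↥gs ≃ Fin l' := (Fintype.equivFin ↥gs).trans (finCongr hce) with he
  set Y' : Fin l' → Set T := fun j' => D ((e.symm j') : ↥gs).1 with hY'
  set kk' : Fin l' → Fin n := fun j' => kk ((e.symm j') : ↥gs).1 with hkk'
  have hDsubX : ∀ j, (C j).Nonempty → D j ⊆ X := by
    intro j hCj a haD
    obtain ⟨b, hb⟩ := hCj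
    have := hfnd.1 (Sum.inr j)
    simp only [Sum.elim_inr] at this
    rw [hCD j] at this
    exact (this (Set.mk_mem_prod hb haD)).2
  refine ⟨l', Y', kk', fun j' => hD _, ?_, ?_, ?_⟩
  · intro j'
    have hj := ((e.symm j') : ↥gs).2
    have hfix := hYfix ((e.symm j') : ↥gs).1
    rw [hCD] at hfix
    exact pfixes_snd hfix (hgsne _ hj)
  · rintro (i | j')
    · exact hsub i
    · exact hDsubX _ (hgsne _ ((e.symm j') : ↥gs).2)
  · intro Y₀ hY₀c hY₀ne hY₀X
    obtain ⟨y, hy⟩ := hY₀ne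
    obtain ⟨idx, x, hx1, hx2⟩ := hfnd.2 ((Set.univ : Set S) ×ˢ Y₀)
      (isConstructible_univ.sprod hY₀c) ⟨(1, y), trivial, hy⟩
      (Set.prod_mono subset_rfl hY₀X)
    cases idx with
    | inl i =>
      simp only [Sum.elim_inl] at hx2
      exact ⟨Sum.inl i, x.2, hx1.2, hx2.2⟩
    | inr j =>
      simp only [Sum.elim_inr] at hx2
      rw [hCD j] at hx2
      have hjgs : j ∈ gs := Finset.mem_filter.mpr ⟨Finset.mem_univ j, ⟨x.1, hx2.1⟩⟩
      refine ⟨Sum.inr (e ⟨j, hjgs⟩), x.2, hx1.2, ?_⟩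
      show x.2 ∈ Y' (e ⟨j, hjgs⟩)
      rw [hY']
      simp only [Equiv.symm_apply_apply]
      exact hx2.2

end Forward

section Backward

variable {S T : Type*} [Monoid S] [Monoid T] [IsLeftCancelMul S] [IsLeftCancelMul T]

theorem srb_prod_of (hS : StronglyRegularOnBoundary S)
    (hT : StronglyRegularOnBoundary T) : StronglyRegularOnBoundary (S × T) := by
  classical
  intro n H hH m X' Xi' hX'c hXi'c hsub hne hcovH
  choose f g hf hg hfg using fun k => inInvHull_prod_decomp (hH k)
  obtain ⟨A, B, hA, hB, rfl⟩ := isConstructible_prod_decomp hX'c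
  choose Ai Bi hAi hBi hXieq using fun i => isConstructible_prod_decomp (hXi'c i)
  by_contra hcon
  push_neg at hcon
  -- the type of matched pairs
  set Γ : Type _ := {q : Set S × Set T × Fin n //
    IsConstructible q.1 ∧ q.1 ⊆ A ∧ PFixes (f q.2.2) q.1 ∧
    IsConstructible q.2.1 ∧ q.2.1 ⊆ B ∧ PFixes (g q.2.2) q.2.1} with hΓ
  -- for every finite matched family there is a test rectangle avoiding everything
  have hstep : ∀ P : Finset Γ, ∃ C₀ D₀ : _,
      IsConstructible C₀ ∧ IsConstructible D₀ ∧ C₀.Nonempty ∧ D₀.Nonempty ∧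
      C₀ ⊆ A ∧ D₀ ⊆ B ∧
      (∀ i, ¬((C₀ ∩ Ai i).Nonempty ∧ (D₀ ∩ Bi i).Nonempty)) ∧
      (∀ γ : Γ, γ ∈ P →
        ¬((C₀ ∩ γ.1.1).Nonempty ∧ (D₀ ∩ γ.1.2.1).Nonempty)) := by
    intro P
    set eP : ↥P ≃ Fin P.card := (Fintype.equivFin ↥P).trans
      (finCongr (Fintype.card_coe P)) with heP
    set Y : Fin P.card → Set (S × T) :=
      fun j => ((eP.symm j : ↥P) : Γ).1.1 ×ˢ ((eP.symm j : ↥P) : Γ).1.2.1 with hY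
    set kk : Fin P.card → Fin n := fun j => ((eP.symm j : ↥P) : Γ).1.2.2 with hkk
    have h1 : ∀ j, IsConstructible (Y j) := by
      intro j
      obtain ⟨hCc, hCA, hCfix, hDc, hDB, hDfix⟩ := ((eP.symm j : ↥P) : Γ).2
      exact hCc.sprod hDc
    have h2 : ∀ j, PFixes (H (kk j)) (Y j) := by
      intro j
      obtain ⟨hCc, hCA, hCfix, hDc, hDB, hDfix⟩ := ((eP.symm j : ↥P) : Γ).2
      rw [hfg]
      exact pfixes_pprod hCfix hDfix
    have hnf : ¬ IsFoundation (A ×ˢ B) (Sum.elim Xi' Y) := hcon P.card Y kk h1 h2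
    have hmemsub : ∀ idx, Sum.elim Xi' Y idx ⊆ A ×ˢ B := by
      rintro (i | j)
      · exact hsub i
      · simp only [Sum.elim_inr, hY]
        obtain ⟨hCc, hCA, hCfix, hDc, hDB, hDfix⟩ := ((eP.symm j : ↥P) : Γ).2
        exact Set.prod_mono hCA hDB
    rw [IsFoundation, not_and_or] at hnf
    rcases hnf with hnf | hnf
    · exact absurd hmemsub hnf
    · push_neg at hnf
      obtain ⟨Z, hZc, hZne, hZsub, hZavoid⟩ := hnf
      obtain ⟨C₀, D₀, hC₀, hD₀, rfl⟩ := isConstructible_prod_decomp hZc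
      obtain ⟨⟨c₀, d₀⟩, hcd⟩ := hZne
      have hC₀ne : C₀.Nonempty := ⟨c₀, hcd.1⟩
      have hD₀ne : D₀.Nonempty := ⟨d₀, hcd.2⟩
      have hC₀A : C₀ ⊆ A := fun a ha => (hZsub (Set.mk_mem_prod ha hcd.2)).1
      have hD₀B : D₀ ⊆ B := fun b hb => (hZsub (Set.mk_mem_prod hcd.1 hb)).2
      refine ⟨C₀, D₀, hC₀, hD₀, hC₀ne, hD₀ne, hC₀A, hD₀B, ?_, ?_⟩
      · rintro i ⟨⟨a, ha1, ha2⟩, ⟨b, hb1, hb2⟩⟩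
        have hdis := hZavoid (Sum.inl i)
        simp only [Sum.elim_inl] at hdis
        have hmem : (a, b) ∈ C₀ ×ˢ D₀ ∩ Xi' i := by
          refine ⟨Set.mk_mem_prod ha1 hb1, ?_⟩
          rw [hXieq i]
          exact Set.mk_mem_prod ha2 hb2
        rw [hdis] at hmem
        exact hmem
      · rintro γ hγ ⟨⟨a, ha1, ha2⟩, ⟨b, hb1, hb2⟩⟩
        have hdis := hZavoid (Sum.inr (eP ⟨γ, hγ⟩))
        simp only [Sum.elim_inr, hY, Equiv.symm_apply_apply] at hdis
        have hmem : (a, b) ∈ C₀ ×ˢ D₀ ∩ (γ : Γ).1.1 ×ˢ (γ : Γ).1.2.1 :=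
          ⟨Set.mk_mem_prod ha1 hb1, Set.mk_mem_prod ha2 hb2⟩
        rw [hdis] at hmem
        exact hmem
  choose C₀ D₀ hC₀c hD₀c hC₀ne hD₀ne hC₀A hD₀B havoidXi havoidΓ using hstep
  -- maximal filters through the test rectangles
  have hMF : ∀ P : Finset Γ, ∃ F, IsMaxIF F ∧ C₀ P ∈ F :=
    fun P => exists_maxIF (hC₀c P) (hC₀ne P)
  have hNF : ∀ P : Finset Γ, ∃ F, IsMaxIF F ∧ D₀ P ∈ F :=
    fun P => exists_maxIF (hD₀c P) (hD₀ne P)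
  choose 𝔐 h𝔐max h𝔐mem using hMF
  choose 𝔑 h𝔑max h𝔑mem using hNF
  -- an ultrafilter refining the order filter on finite matched families
  haveI : Nonempty (Finset Γ) := ⟨∅⟩
  set 𝒰 : Ultrafilter (Finset Γ) := @Ultrafilter.of _ Filter.atTop Filter.atTop_neBot
    with h𝒰
  have h𝒰le : ∀ s ∈ (Filter.atTop : Filter (Finset Γ)), s ∈ 𝒰 := by
    intro s hs
    exact (Ultrafilter.of_le Filter.atTop) hs
  set χS : Set S → Prop := fun C => {P | C ∈ 𝔐 P} ∈ 𝒰 with hχS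
  set χT : Set T → Prop := fun D => {P | D ∈ 𝔑 P} ∈ 𝒰 with hχT
  have hχSlim : IsLimChar χS := ⟨Finset Γ, 𝒰, 𝔐, h𝔐max, fun C => Iff.rfl⟩
  have hχTlim : IsLimChar χT := ⟨Finset Γ, 𝒰, 𝔑, h𝔑max, fun D => Iff.rfl⟩
  have hχSA : χS A := by
    have : {P : Finset Γ | A ∈ 𝔐 P} = Set.univ := by
      ext P
      simp only [Set.mem_setOf_eq, Set.mem_univ, iff_true]
      exact (h𝔐max P).1.2.2.1 _ (h𝔐mem P) A hA (hC₀A P)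
    show {P : Finset Γ | A ∈ 𝔐 P} ∈ 𝒰
    rw [this]
    exact Filter.univ_mem
  have hχTB : χT B := by
    have : {P : Finset Γ | B ∈ 𝔑 P} = Set.univ := by
      ext P
      simp only [Set.mem_setOf_eq, Set.mem_univ, iff_true]
      exact (h𝔑max P).1.2.2.1 _ (h𝔑mem P) B hB (hD₀B P)
    show {P : Finset Γ | B ∈ 𝔑 P} ∈ 𝒰
    rw [this]
    exact Filter.univ_mem
  -- crossing properties
  have hnotboth_i : ∀ i, ¬(χS (Ai i) ∧ χT (Bi i)) := by
    rintro i ⟨hSi, hTi⟩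
    obtain ⟨P, hP1, hP2⟩ := Filter.nonempty_of_mem (Filter.inter_mem hSi hTi)
    refine havoidXi P i ⟨?_, ?_⟩
    · exact (h𝔐max P).1.2.1 _ ((h𝔐max P).1.2.2.2 _ (h𝔐mem P) _ hP1) |>.2
    · exact (h𝔑max P).1.2.1 _ ((h𝔑max P).1.2.2.2 _ (h𝔑mem P) _ hP2) |>.2
  have hnotboth_γ : ∀ γ : Γ, ¬(χS γ.1.1 ∧ χT γ.1.2.1) := by
    rintro γ ⟨hSγ, hTγ⟩
    have hup : {P : Finset Γ | γ ∈ P} ∈ 𝒰 := by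
      refine h𝒰le _ ?_
      have := Filter.mem_atTop ({γ} : Finset Γ)
      refine Filter.mem_of_superset this ?_
      intro P hP
      exact Finset.singleton_subset_iff.mp hP
    obtain ⟨P, hPγ, hP1, hP2⟩ := Filter.nonempty_of_mem
      (Filter.inter_mem hup (Filter.inter_mem hSγ hTγ))
    refine havoidΓ P γ hPγ ⟨?_, ?_⟩
    · exact (h𝔐max P).1.2.1 _ ((h𝔐max P).1.2.2.2 _ (h𝔐mem P) _ hP1) |>.2
    · exact (h𝔑max P).1.2.1 _ ((h𝔑max P).1.2.2.2 _ (h𝔑mem P) _ hP2) |>.2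
  -- subset facts
  have hAisub : ∀ i, χT (Bi i) → Ai i ⊆ A := by
    intro i hTi a ha
    obtain ⟨P, hP⟩ := Filter.nonempty_of_mem hTi
    obtain ⟨b, hb⟩ := ((h𝔑max P).1.2.1 _ hP).2
    have := hsub i
    rw [hXieq i] at this
    exact (this (Set.mk_mem_prod ha hb)).1
  have hBisub : ∀ i (a : S), a ∈ Ai i → Bi i ⊆ B := by
    intro i a ha b hb
    have := hsub i
    rw [hXieq i] at this
    exact (this (Set.mk_mem_prod ha hb)).2
  -- the set of indices with a χT-large fixed ideal
  set KT : Set (Fin n) := {k | ∃ D, IsConstructible D ∧ D ⊆ B ∧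
    PFixes (g k) D ∧ χT D} with hKT
  -- core step: points of A avoiding all χT-paired ideals are fixed by some k ∈ KT
  have hcore : ∀ a ∈ A, (∀ i, χT (Bi i) → a ∉ Ai i) →
      ∃ k, k ∈ KT ∧ f k a = some a := by
    intro a haA hanot
    set Ja : Finset (Fin m) := Finset.univ.filter (fun i => a ∈ Ai i) with hJa
    set eJ : ↥Ja ≃ Fin Ja.card := (Fintype.equivFin ↥Ja).trans
      (finCongr (Fintype.card_coe Ja)) with heJ
    set Bi' : Fin Ja.card → Set T := fun i' => Bi ((eJ.symm i' : ↥Ja) : Fin m)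
      with hBi'
    have hBi'c : ∀ i', IsConstructible (Bi' i') := fun i' => hBi _
    have hBi'sub : ∀ i', Bi' i' ⊆ B := fun i' =>
      hBisub _ a (Finset.mem_filter.mp (eJ.symm i' : ↥Ja).2).2
    have hdiffmem : ∀ b, b ∈ B → b ∉ ⋃ i', Bi' i' →
        (a, b) ∈ (A ×ˢ B) \ ⋃ i, Xi' i := by
      intro b hbB hbnot
      refine ⟨Set.mk_mem_prod haA hbB, fun hmem => ?_⟩
      obtain ⟨i, hi⟩ := Set.mem_iUnion.mp hmem
      rw [hXieq i] at hi
      have hiJ : i ∈ Ja := Finset.mem_filter.mpr ⟨Finset.mem_univ i, hi.1⟩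
      refine hbnot (Set.mem_iUnion.mpr ⟨eJ ⟨i, hiJ⟩, ?_⟩)
      show b ∈ Bi' (eJ ⟨i, hiJ⟩)
      rw [hBi']
      simp only [Equiv.symm_apply_apply]
      exact hi.2
    by_cases hcase : B ⊆ ⋃ i', Bi' i'
    · obtain ⟨i', hi'⟩ := hχTlim.hit hχTB hBi'c
        (foundation_of_cover hBi'sub hcase)
      have hiJ := (Finset.mem_filter.mp (eJ.symm i' : ↥Ja).2).2
      exact absurd hiJ (hanot _ hi')
    · have hdiffne : (B \ ⋃ i', Bi' i').Nonempty := by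
        rw [Set.not_subset] at hcase
        obtain ⟨b, hb1, hb2⟩ := hcase
        exact ⟨b, hb1, hb2⟩
      obtain ⟨b₀, hb₀B, hb₀not⟩ := hdiffne
      obtain ⟨k₀, hk₀⟩ := Set.mem_iUnion.mp (hcovH (hdiffmem b₀ hb₀B hb₀not))
      rw [hfg k₀] at hk₀
      have hk₀' := pprod_eq_some.mp hk₀
      set ρ : Fin n → Fin n := fun k => if f k a = some a then k else k₀ with hρ
      have hρfix : ∀ k, f (ρ k) a = some a := by
        intro k
        simp only [hρ]
        split
        · assumption
        · exact hk₀'.1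
      have hcovT : B \ ⋃ i', Bi' i' ⊆ ⋃ k, {b | g (ρ k) b = some b} := by
        intro b hb
        obtain ⟨k, hk⟩ := Set.mem_iUnion.mp (hcovH (hdiffmem b hb.1 hb.2))
        rw [hfg k] at hk
        have hk' := pprod_eq_some.mp hk
        refine Set.mem_iUnion.mpr ⟨k, ?_⟩
        show g (ρ k) b = some b
        simp only [hρ]
        rw [if_pos hk'.1]
        exact hk'.2
      have := srb_limchar hT hχTlim (f := fun k => g (ρ k))
        (fun k => hg (ρ k)) hB hBi'c hBi'sub hcovT hχTB
      rcases this with ⟨i', hi'⟩ | ⟨k, D, hDc, hDB, hDfix, hDχ⟩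
      · have hiJ := (Finset.mem_filter.mp (eJ.symm i' : ↥Ja).2).2
        exact absurd hiJ (hanot _ hi')
      · exact ⟨ρ k, ⟨D, hDc, hDB, hDfix, hDχ⟩, hρfix k⟩
  -- final application on the S side
  set IT : Finset (Fin m) := Finset.univ.filter (fun i => χT (Bi i)) with hIT
  set eI : ↥IT ≃ Fin IT.card := (Fintype.equivFin ↥IT).trans
    (finCongr (Fintype.card_coe IT)) with heI
  set Ai' : Fin IT.card → Set S := fun i' => Ai ((eI.symm i' : ↥IT) : Fin m)
    with hAi'
  have hAi'c : ∀ i', IsConstructible (Ai' i') := fun i' => hAi _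
  have hAi'sub : ∀ i', Ai' i' ⊆ A := fun i' =>
    hAisub _ (Finset.mem_filter.mp (eI.symm i' : ↥IT).2).2
  have hITnot : ∀ a : S, a ∉ ⋃ i', Ai' i' → ∀ i, χT (Bi i) → a ∉ Ai i := by
    intro a hnot i hTi hai
    have hiI : i ∈ IT := Finset.mem_filter.mpr ⟨Finset.mem_univ i, hTi⟩
    refine hnot (Set.mem_iUnion.mpr ⟨eI ⟨i, hiI⟩, ?_⟩)
    show a ∈ Ai' (eI ⟨i, hiI⟩)
    rw [hAi']
    simp only [Equiv.symm_apply_apply]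
    exact hai
  by_cases hScase : A ⊆ ⋃ i', Ai' i'
  · obtain ⟨i', hi'⟩ := hχSlim.hit hχSA hAi'c (foundation_of_cover hAi'sub hScase)
    have hiI := (Finset.mem_filter.mp (eI.symm i' : ↥IT).2).2
    exact hnotboth_i _ ⟨hi', hiI⟩
  · have hdiffne : (A \ ⋃ i', Ai' i').Nonempty := by
      rw [Set.not_subset] at hScase
      obtain ⟨a, ha1, ha2⟩ := hScase
      exact ⟨a, ha1, ha2⟩
    obtain ⟨a₀, ha₀A, ha₀not⟩ := hdiffne
    obtain ⟨k₀, hk₀KT, -⟩ := hcore a₀ ha₀A (hITnot a₀ ha₀not)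
    set ρ' : Fin n → Fin n := fun k => if k ∈ KT then k else k₀ with hρ'
    have hρ'KT : ∀ k, ρ' k ∈ KT := by
      intro k
      simp only [hρ']
      split
      · assumption
      · exact hk₀KT
    have hcovS : A \ ⋃ i', Ai' i' ⊆ ⋃ k, {s | f (ρ' k) s = some s} := by
      intro a ha
      obtain ⟨k, hkKT, hkfix⟩ := hcore a ha.1 (hITnot a ha.2)
      refine Set.mem_iUnion.mpr ⟨k, ?_⟩
      show f (ρ' k) a = some a
      simp only [hρ']
      rw [if_pos hkKT]
      exact hkfix
    have := srb_limchar hS hχSlim (f := fun k => f (ρ' k))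
      (fun k => hf (ρ' k)) hA hAi'c hAi'sub hcovS hχSA
    rcases this with ⟨i', hi'⟩ | ⟨k, C, hCc, hCA, hCfix, hCχ⟩
    · have hiI := (Finset.mem_filter.mp (eI.symm i' : ↥IT).2).2
      exact hnotboth_i _ ⟨hi', hiI⟩
    · obtain ⟨D, hDc, hDB, hDfix, hDχ⟩ := hρ'KT k
      exact hnotboth_γ ⟨(C, D, ρ' k), hCc, hCA, hCfix, hDc, hDB, hDfix⟩ ⟨hCχ, hDχ⟩

end Backward

end Aux

/-- The direct product of two left cancellative monoids is strongly
C*-regular on the boundary if and only if both factors are. -/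
theorem cstar_stmt6 {S T : Type*} [Monoid S] [Monoid T]
    [IsLeftCancelMul S] [IsLeftCancelMul T] :
    StronglyRegularOnBoundary (S × T) ↔
      (StronglyRegularOnBoundary S ∧ StronglyRegularOnBoundary T) := by
  constructor
  · intro h
    exact ⟨srb_prod_fst h, srb_prod_snd h⟩
  · rintro ⟨hS, hT⟩
    exact srb_prod_of hS hT

end SgC
end

section
/- Let S and T be nontrivial left cancellative monoids whose monoid coproduct S ∗ T is left cancellative. If h ∈ I_ℓ(S ∗ T) maps some element of ι_S(S) into ι_S(S) (i.e. there is s ∈ S with ι_S(s) ∈ dom h and h(ι_S(s)) ∈ ι_S(S)), then h belongs to the canonical copy of I_ℓ(S) in I_ℓ(S ∗ T), i.e. h = (λ_{ι_S s_{2n}})^{-1} λ_{ι_S s_{2n-1}} ⋯ (λ_{ι_S s_2})^{-1} λ_{ι_S s_1} for some s_1, …, s_{2n} ∈ S. -/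
open scoped Classical
set_option linter.unusedSectionVars false

namespace SgC

variable {M : Type*}

/-! ### development -/

section Dev

variable {S T : Type*} [Monoid S] [Monoid T]

/-- A letter is good if it is not an identity element. -/
def IsGood : S ⊕ T → Prop := Sum.elim (· ≠ 1) (· ≠ 1)

/-- All letters of the word are good. -/
def GoodW (w : List (S ⊕ T)) : Prop := ∀ ℓ ∈ w, IsGood ℓ

/-- The word alternates sides. -/
def AltW (w : List (S ⊕ T)) : Prop := w.Chain' (fun p q => p.isLeft ≠ q.isLeft)

/-- Left action of `S` on words. -/
noncomputable def actS (a : S) : List (S ⊕ T) → List (S ⊕ T)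
  | [] => if a = 1 then [] else [Sum.inl a]
  | Sum.inl b :: w => if a * b = 1 then w else Sum.inl (a * b) :: w
  | Sum.inr t :: w => if a = 1 then Sum.inr t :: w else Sum.inl a :: Sum.inr t :: w

/-- Left action of `T` on words. -/
noncomputable def actT (t : T) : List (S ⊕ T) → List (S ⊕ T)
  | [] => if t = 1 then [] else [Sum.inr t]
  | Sum.inr b :: w => if t * b = 1 then w else Sum.inr (t * b) :: w
  | Sum.inl a :: w => if t = 1 then Sum.inl a :: w else Sum.inr t :: Sum.inl a :: w

lemma goodW_tail {ℓ : S ⊕ T} {w : List (S ⊕ T)} (h : GoodW (ℓ :: w)) : GoodW w :=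
  fun x hx => h x (List.mem_cons_of_mem _ hx)

lemma altW_tail {ℓ : S ⊕ T} {w : List (S ⊕ T)} (h : AltW (ℓ :: w)) : AltW w :=
  (List.isChain_cons.1 h).2

lemma actS_good {a : S} {w : List (S ⊕ T)} (hg : GoodW w) : GoodW (actS a w) := by
  match w with
  | [] =>
    simp only [actS]; split_ifs with h
    · intro x hx; simp at hx
    · intro x hx; simp at hx; subst hx; exact h
  | Sum.inl b :: w =>
    simp only [actS]; split_ifs with h
    · exact goodW_tail hg
    · intro x hx
      rcases List.mem_cons.1 hx with rfl | hx
      · exact h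
      · exact goodW_tail hg x hx
  | Sum.inr t :: w =>
    simp only [actS]; split_ifs with h
    · exact hg
    · intro x hx
      rcases List.mem_cons.1 hx with rfl | hx
      · exact h
      · exact hg x hx

lemma actS_alt {a : S} {w : List (S ⊕ T)} (hg : GoodW w) (ha : AltW w) : AltW (actS a w) := by
  match w with
  | [] =>
    simp only [actS]; split_ifs
    · exact List.isChain_nil
    · exact List.isChain_singleton _
  | Sum.inl b :: w =>
    simp only [actS]; split_ifs
    · exact altW_tail ha
    · exact List.isChain_cons.2 ⟨(List.isChain_cons.1 ha).1, altW_tail ha⟩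
  | Sum.inr t :: w =>
    simp only [actS]; split_ifs
    · exact ha
    · exact List.isChain_cons_cons.2 ⟨by simp, ha⟩


lemma actT_good {a : T} {w : List (S ⊕ T)} (hg : GoodW w) : GoodW (actT a w) := by
  match w with
  | [] =>
    simp only [actT]; split_ifs with h
    · intro x hx; simp at hx
    · intro x hx; simp at hx; subst hx; exact h
  | Sum.inr b :: w =>
    simp only [actT]; split_ifs with h
    · exact goodW_tail hg
    · intro x hx
      rcases List.mem_cons.1 hx with rfl | hx
      · exact h
      · exact goodW_tail hg x hx
  | Sum.inl t :: w =>
    simp only [actT]; split_ifs with h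
    · exact hg
    · intro x hx
      rcases List.mem_cons.1 hx with rfl | hx
      · exact h
      · exact hg x hx

lemma actT_alt {a : T} {w : List (S ⊕ T)} (hg : GoodW w) (ha : AltW w) : AltW (actT a w) := by
  match w with
  | [] =>
    simp only [actT]; split_ifs
    · exact List.isChain_nil
    · exact List.isChain_singleton _
  | Sum.inr b :: w =>
    simp only [actT]; split_ifs
    · exact altW_tail ha
    · exact List.isChain_cons.2 ⟨(List.isChain_cons.1 ha).1, altW_tail ha⟩
  | Sum.inl t :: w =>
    simp only [actT]; split_ifs
    · exact ha
    · exact List.isChain_cons_cons.2 ⟨by simp, ha⟩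

lemma actS_one {w : List (S ⊕ T)} (hg : GoodW w) : actS (1 : S) w = w := by
  match w with
  | [] => simp [actS]
  | Sum.inl b :: w =>
    have hb : b ≠ 1 := hg (Sum.inl b) (by simp)
    simp [actS, hb]
  | Sum.inr t :: w => simp [actS]

lemma actT_one {w : List (S ⊕ T)} (hg : GoodW w) : actT (1 : T) w = w := by
  match w with
  | [] => simp [actT]
  | Sum.inr b :: w =>
    have hb : b ≠ 1 := hg (Sum.inr b) (by simp)
    simp [actT, hb]
  | Sum.inl t :: w => simp [actT]

lemma head_not_inl_of_alt_cancel {b : S} {w : List (S ⊕ T)} (ha : AltW (Sum.inl b :: w)) :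
    ∀ c : S, ∀ w', w ≠ Sum.inl c :: w' := by
  intro c w' hw
  subst hw
  have := (List.isChain_cons_cons.1 ha).1
  simp at this

lemma head_not_inr_of_alt_cancel {b : T} {w : List (S ⊕ T)} (ha : AltW (Sum.inr b :: w)) :
    ∀ c : T, ∀ w', w ≠ Sum.inr c :: w' := by
  intro c w' hw
  subst hw
  have := (List.isChain_cons_cons.1 ha).1
  simp at this

lemma actS_prepend {a : S} {w : List (S ⊕ T)} (hw : ∀ c w', w ≠ Sum.inl c :: w') :
    actS a w = if a = 1 then w else Sum.inl a :: w := by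
  match w with
  | [] => simp [actS]
  | Sum.inl c :: w' => exact absurd rfl (hw c w')
  | Sum.inr t :: w' => simp [actS]

lemma actT_prepend {a : T} {w : List (S ⊕ T)} (hw : ∀ c w', w ≠ Sum.inr c :: w') :
    actT a w = if a = 1 then w else Sum.inr a :: w := by
  match w with
  | [] => simp [actT]
  | Sum.inr c :: w' => exact absurd rfl (hw c w')
  | Sum.inl t :: w' => simp [actT]

lemma actS_mul {a b : S} {w : List (S ⊕ T)} (hg : GoodW w) (ha : AltW w) :
    actS (a * b) w = actS a (actS b w) := by
  by_cases hb : b = 1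
  · subst hb; rw [mul_one, actS_one hg]
  · match w with
    | [] => by_cases hab : a * b = 1 <;> simp [actS, hab, hb]
    | Sum.inl c :: w =>
      by_cases hbc : b * c = 1
      · have ha' : a * b * c = a := by rw [mul_assoc, hbc, mul_one]
        have h1 : actS b (Sum.inl c :: w) = w := by simp [actS, hbc]
        have h2 : actS (a * b) (Sum.inl c :: w) = if a = 1 then w else Sum.inl a :: w := by
          simp only [actS, ha']
        rw [h1, h2, actS_prepend (head_not_inl_of_alt_cancel ha)]
      · have h1 : actS b (Sum.inl c :: w) = Sum.inl (b * c) :: w := by simp [actS, hbc]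
        rw [h1]
        simp only [actS, mul_assoc]
    | Sum.inr t :: w =>
      have h1 : actS b (Sum.inr t :: w) = Sum.inl b :: Sum.inr t :: w := by simp [actS, hb]
      rw [h1]
      by_cases hab : a * b = 1 <;> simp [actS, hab, hb]

lemma actT_mul {a b : T} {w : List (S ⊕ T)} (hg : GoodW w) (ha : AltW w) :
    actT (a * b) w = actT a (actT b w) := by
  by_cases hb : b = 1
  · subst hb; rw [mul_one, actT_one hg]
  · match w with
    | [] => by_cases hab : a * b = 1 <;> simp [actT, hab, hb]
    | Sum.inr c :: w =>
      by_cases hbc : b * c = 1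
      · have ha' : a * b * c = a := by rw [mul_assoc, hbc, mul_one]
        have h1 : actT b (Sum.inr c :: w) = w := by simp [actT, hbc]
        have h2 : actT (a * b) (Sum.inr c :: w) = if a = 1 then w else Sum.inr a :: w := by
          simp only [actT, ha']
        rw [h1, h2, actT_prepend (head_not_inr_of_alt_cancel ha)]
      · have h1 : actT b (Sum.inr c :: w) = Sum.inr (b * c) :: w := by simp [actT, hbc]
        rw [h1]
        simp only [actT, mul_assoc]
    | Sum.inl t :: w =>
      have h1 : actT b (Sum.inl t :: w) = Sum.inr b :: Sum.inl t :: w := by simp [actT, hb]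
      rw [h1]
      by_cases hab : a * b = 1 <;> simp [actT, hab, hb]

/-- Alternating words of non-identity letters. -/
def XW (S T : Type*) [Monoid S] [Monoid T] : Type _ :=
  {w : List (S ⊕ T) // GoodW w ∧ AltW w}

/-- `S` acting on alternating words, as a monoid hom into `Function.End`. -/
noncomputable def endS : S →* Function.End (XW S T) where
  toFun a := fun w => ⟨actS a w.1, actS_good w.2.1, actS_alt w.2.1 w.2.2⟩
  map_one' := by
    funext w
    exact Subtype.ext (actS_one w.2.1)
  map_mul' a b := by
    funext w
    exact Subtype.ext (actS_mul w.2.1 w.2.2)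

noncomputable def endT : T →* Function.End (XW S T) where
  toFun a := fun w => ⟨actT a w.1, actT_good w.2.1, actT_alt w.2.1 w.2.2⟩
  map_one' := by
    funext w
    exact Subtype.ext (actT_one w.2.1)
  map_mul' a b := by
    funext w
    exact Subtype.ext (actT_mul w.2.1 w.2.2)

/-- The normal form of an element of the coproduct. -/
noncomputable def NFX (x : Monoid.Coprod S T) : XW S T :=
  Monoid.Coprod.lift endS endT x ⟨[], fun _ h => absurd h List.not_mem_nil, List.isChain_nil⟩

noncomputable def NF (x : Monoid.Coprod S T) : List (S ⊕ T) := (NFX x).1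

lemma NF_good (x : Monoid.Coprod S T) : GoodW (NF x) := (NFX x).2.1
lemma NF_alt (x : Monoid.Coprod S T) : AltW (NF x) := (NFX x).2.2

lemma NF_one : NF (1 : Monoid.Coprod S T) = [] := by
  simp only [NF, NFX, map_one]
  rfl

lemma NF_inl_mul (a : S) (x : Monoid.Coprod S T) :
    NF (Monoid.Coprod.inl a * x) = actS a (NF x) := by
  simp only [NF, NFX, map_mul, Monoid.Coprod.lift_apply_inl]
  rfl

lemma NF_inr_mul (t : T) (x : Monoid.Coprod S T) :
    NF (Monoid.Coprod.inr t * x) = actT t (NF x) := by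
  simp only [NF, NFX, map_mul, Monoid.Coprod.lift_apply_inr]
  rfl

/-- A letter as an element of the coproduct. -/
def gen : S ⊕ T → Monoid.Coprod S T :=
  Sum.elim (fun a => Monoid.Coprod.inl a) (fun t => Monoid.Coprod.inr t)

/-- A word as an element of the coproduct. -/
def embed (w : List (S ⊕ T)) : Monoid.Coprod S T := (w.map gen).prod

@[simp] lemma embed_nil : embed ([] : List (S ⊕ T)) = 1 := rfl

@[simp] lemma embed_cons (ℓ : S ⊕ T) (w : List (S ⊕ T)) :
    embed (ℓ :: w) = gen ℓ * embed w := by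
  simp [embed]

lemma embed_actS (a : S) {w : List (S ⊕ T)} (hg : GoodW w) :
    embed (actS a w) = Monoid.Coprod.inl a * embed w := by
  match w with
  | [] =>
    by_cases ha : a = 1 <;> simp [actS, ha, gen]
  | Sum.inl b :: w =>
    by_cases hab : a * b = 1
    · have : Monoid.Coprod.inl a * (gen (Sum.inl b) * embed w) = embed w := by
        simp only [gen, Sum.elim_inl, ← mul_assoc, ← map_mul, hab, map_one, one_mul]
      simp [actS, hab, this]
    · simp only [actS, if_neg hab, embed_cons, gen, Sum.elim_inl, ← mul_assoc, ← map_mul]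
  | Sum.inr t :: w =>
    by_cases ha : a = 1 <;> simp [actS, ha, gen]

lemma embed_actT (t : T) {w : List (S ⊕ T)} (hg : GoodW w) :
    embed (actT t w) = Monoid.Coprod.inr t * embed w := by
  match w with
  | [] =>
    by_cases ha : t = 1 <;> simp [actT, ha, gen]
  | Sum.inr b :: w =>
    by_cases hab : t * b = 1
    · have : Monoid.Coprod.inr t * (gen (Sum.inr b) * embed w) = embed w := by
        simp only [gen, Sum.elim_inr, ← mul_assoc, ← map_mul, hab, map_one, one_mul]
      simp [actT, hab, this]
    · simp only [actT, if_neg hab, embed_cons, gen, Sum.elim_inr, ← mul_assoc, ← map_mul]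
  | Sum.inl b :: w =>
    by_cases ha : t = 1 <;> simp [actT, ha, gen]

lemma embed_NF (x : Monoid.Coprod S T) : embed (NF x) = x := by
  induction x using Monoid.Coprod.induction_on' with
  | one => rw [NF_one]; rfl
  | inl_mul m x ih => rw [NF_inl_mul, embed_actS m (NF_good x), ih]
  | inr_mul m x ih => rw [NF_inr_mul, embed_actT m (NF_good x), ih]

lemma NF_embed {w : List (S ⊕ T)} (hg : GoodW w) (ha : AltW w) : NF (embed w) = w := by
  induction w with
  | nil => simpa using NF_one
  | cons ℓ w ih =>
    have hg' := goodW_tail hg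
    have ha' := altW_tail ha
    match ℓ with
    | Sum.inl a =>
      rw [embed_cons]
      show NF (Monoid.Coprod.inl a * embed w) = _
      rw [NF_inl_mul, ih hg' ha', actS_prepend (head_not_inl_of_alt_cancel ha),
        if_neg (hg (Sum.inl a) (by simp))]
    | Sum.inr a =>
      rw [embed_cons]
      show NF (Monoid.Coprod.inr a * embed w) = _
      rw [NF_inr_mul, ih hg' ha', actT_prepend (head_not_inr_of_alt_cancel ha),
        if_neg (hg (Sum.inr a) (by simp))]

lemma NF_inl (a : S) : NF (Monoid.Coprod.inl a : Monoid.Coprod S T) =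
    if a = 1 then [] else [Sum.inl a] := by
  have : (Monoid.Coprod.inl a : Monoid.Coprod S T) = Monoid.Coprod.inl a * 1 := by simp
  rw [this, NF_inl_mul, NF_one]
  rfl

/-- Merging a single `S`-letter on the right of a word. -/
noncomputable def rmerge : List (S ⊕ T) → S → List (S ⊕ T)
  | [], σ => if σ = 1 then [] else [Sum.inl σ]
  | [Sum.inl α], σ => if α * σ = 1 then [] else [Sum.inl (α * σ)]
  | [Sum.inr t], σ => if σ = 1 then [Sum.inr t] else [Sum.inr t, Sum.inl σ]
  | ℓ :: b :: w, σ => ℓ :: rmerge (b :: w) σ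

lemma rmerge_cons_inr (t : T) (w : List (S ⊕ T)) (σ : S) :
    rmerge (Sum.inr t :: w) σ = Sum.inr t :: rmerge w σ := by
  match w with
  | [] => simp only [rmerge]; split_ifs <;> rfl
  | b :: w => simp only [rmerge]

lemma rmerge_cons_inl {w : List (S ⊕ T)} (hw : w ≠ []) (b : S) (σ : S) :
    rmerge (Sum.inl b :: w) σ = Sum.inl b :: rmerge w σ := by
  match w with
  | [] => exact absurd rfl hw
  | c :: w => simp only [rmerge]

lemma rmerge_head_not_inr {w : List (S ⊕ T)} (σ : S) (hw : ∀ c w', w ≠ Sum.inr c :: w') :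
    ∀ c w', rmerge w σ ≠ Sum.inr c :: w' := by
  match w with
  | [] =>
    intro c w'
    simp only [rmerge]
    split_ifs <;> simp
  | Sum.inl b :: w =>
    match w with
    | [] =>
      intro c w'
      simp only [rmerge]
      split_ifs <;> simp
    | d :: w =>
      intro c w'
      rw [rmerge_cons_inl (by simp)]
      simp
  | Sum.inr b :: w => exact absurd rfl (hw b w)

lemma NF_embed_mul_inl {w : List (S ⊕ T)} (hg : GoodW w) (ha : AltW w) (σ : S) :
    NF (embed w * Monoid.Coprod.inl σ) = rmerge w σ := by
  induction w with
  | nil =>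
    rw [embed_nil, one_mul, NF_inl]
    simp only [rmerge]
  | cons ℓ w ih =>
    have hg' := goodW_tail hg
    have ha' := altW_tail ha
    have hstep := ih hg' ha'
    match ℓ with
    | Sum.inl a =>
      have hane : a ≠ 1 := hg (Sum.inl a) (by simp)
      rw [embed_cons]
      show NF (Monoid.Coprod.inl a * embed w * Monoid.Coprod.inl σ) = _
      rw [mul_assoc, NF_inl_mul, hstep]
      match w with
      | [] =>
        by_cases hσ : σ = 1
        · subst hσ
          have h1 : a * 1 ≠ 1 := by simpa using hane
          simp [rmerge, actS, hane, h1]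
        · simp [rmerge, actS, hσ]
      | Sum.inr t :: w' =>
        rw [rmerge_cons_inr, rmerge_cons_inl (by simp)]
        simp [actS, hane, rmerge_cons_inr]
      | Sum.inl b :: w' => exact absurd rfl (head_not_inl_of_alt_cancel ha b w')
    | Sum.inr t =>
      have htne : t ≠ 1 := hg (Sum.inr t) (by simp)
      rw [embed_cons]
      show NF (Monoid.Coprod.inr t * embed w * Monoid.Coprod.inl σ) = _
      rw [mul_assoc, NF_inr_mul, hstep, rmerge_cons_inr,
        actT_prepend (rmerge_head_not_inr σ (head_not_inr_of_alt_cancel ha)), if_neg htne]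

lemma NF_mul_inl (x : Monoid.Coprod S T) (σ : S) :
    NF (x * Monoid.Coprod.inl σ) = rmerge (NF x) σ := by
  conv_lhs => rw [← embed_NF x]
  exact NF_embed_mul_inl (NF_good x) (NF_alt x) σ

/-- The canonical `S`-head of an element. -/
noncomputable def Shd (x : Monoid.Coprod S T) : S :=
  match NF x with
  | Sum.inl c :: _ => c
  | _ => 1

/-- The canonical tail of an element. -/
noncomputable def Stl (x : Monoid.Coprod S T) : Monoid.Coprod S T :=
  match NF x with
  | Sum.inl _ :: w => embed w
  | _ => x

/-- Words with no leading `S`-letter. -/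
def TleadW (w : List (S ⊕ T)) : Prop := ∀ c w', w ≠ Sum.inl c :: w'

lemma Shd_Stl (x : Monoid.Coprod S T) : Monoid.Coprod.inl (Shd x) * Stl x = x := by
  match hnf : NF x with
  | [] => simp [Shd, Stl, hnf]
  | Sum.inl c :: w =>
    simp only [Shd, Stl, hnf]
    have h1 : Monoid.Coprod.inl c * embed w = embed (Sum.inl c :: w) := by simp [gen]
    rw [h1, ← hnf, embed_NF]
  | Sum.inr c :: w => simp [Shd, Stl, hnf]

lemma Stl_tlead (x : Monoid.Coprod S T) : TleadW (NF (Stl x)) := by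
  match hnf : NF x with
  | [] =>
    simp only [Stl, hnf]
    intro c w' h
    simp [hnf] at h
  | Sum.inl c :: w =>
    have hG := NF_good x
    have hA := NF_alt x
    rw [hnf] at hG hA
    simp only [Stl, hnf]
    rw [NF_embed (goodW_tail hG) (altW_tail hA)]
    exact head_not_inl_of_alt_cancel hA
  | Sum.inr c :: w =>
    simp only [Stl, hnf]
    intro c' w' h
    simp [hnf] at h

lemma canon_unique {p q : S} {m m' : Monoid.Coprod S T} (hm : TleadW (NF m))
    (hm' : TleadW (NF m'))
    (h : Monoid.Coprod.inl p * m = Monoid.Coprod.inl q * m') : p = q ∧ m = m' := by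
  have hNF := congrArg NF h
  rw [NF_inl_mul, NF_inl_mul, actS_prepend hm, actS_prepend hm'] at hNF
  have hmm : NF m = NF m' → m = m' := by
    intro hh
    rw [← embed_NF m, ← embed_NF m', hh]
  by_cases hp : p = 1 <;> by_cases hq : q = 1
  · rw [if_pos hp, if_pos hq] at hNF
    exact ⟨hp.trans hq.symm, hmm hNF⟩
  · rw [if_pos hp, if_neg hq] at hNF
    exact absurd hNF (hm q (NF m'))
  · rw [if_neg hp, if_pos hq] at hNF
    exact absurd hNF.symm (hm' p (NF m))
  · rw [if_neg hp, if_neg hq] at hNF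
    have h1 : Sum.inl p = (Sum.inl q : S ⊕ T) ∧ NF m = NF m' := by
      rw [List.cons.injEq] at hNF
      exact hNF
    exact ⟨Sum.inl.inj h1.1, hmm h1.2⟩

lemma Shd_Stl_unique {x : Monoid.Coprod S T} {p : S} {m : Monoid.Coprod S T}
    (h : x = Monoid.Coprod.inl p * m) (hm : TleadW (NF m)) : Shd x = p ∧ Stl x = m := by
  have := canon_unique (Stl_tlead x) hm ((Shd_Stl x).trans h)
  exact this

lemma Shd_inl (s : S) : Shd (Monoid.Coprod.inl s : Monoid.Coprod S T) = s := by
  by_cases hs : s = 1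
  · subst hs
    simp only [Shd, map_one, NF_one]
  · simp only [Shd, NF_inl, if_neg hs]

lemma Stl_inl (s : S) : Stl (Monoid.Coprod.inl s : Monoid.Coprod S T) = 1 := by
  by_cases hs : s = 1
  · subst hs
    simp only [Stl, map_one, NF_one]
  · simp only [Stl, NF_inl, if_neg hs]
    rfl

end Dev
section PartialMaps

variable {M : Type*}

lemma option_ext {α : Type*} {o₁ o₂ : Option α} (h : ∀ y, o₁ = some y ↔ o₂ = some y) :
    o₁ = o₂ := by
  cases ho₁ : o₁ with
  | none =>
    cases ho₂ : o₂ with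
    | none => rfl
    | some y => exact absurd (ho₁ ▸ (h y).2 ho₂) (by simp)
  | some y => exact ((h y).1 ho₁).symm

variable [Mul M] [IsLeftCancelMul M]

lemma pinv_ptransl_some {b z y : M} : pinv (ptransl b) z = some y ↔ b * y = z := by
  constructor
  · intro h
    by_cases hex : ∃ s, ptransl b s = some z
    · simp only [pinv, dif_pos hex, Option.some.injEq] at h
      have hspec := hex.choose_spec
      rw [h] at hspec
      simpa [ptransl] using hspec
    · simp only [pinv, dif_neg hex] at h
      exact absurd h (by simp)
  · intro h
    have hex : ∃ s, ptransl b s = some z := ⟨y, by simp [ptransl, h]⟩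
    have hchoose : b * hex.choose = z := by simpa [ptransl] using hex.choose_spec
    simp only [pinv, dif_pos hex, Option.some.injEq]
    exact mul_left_cancel (hchoose.trans h.symm)

lemma pinv_ptransl_none {b z : M} : pinv (ptransl b) z = none ↔ ∀ y, b * y ≠ z := by
  constructor
  · intro h y hy
    rw [pinv_ptransl_some.2 hy] at h
    simp at h
  · intro h
    cases ho : pinv (ptransl b) z with
    | none => rfl
    | some y => exact absurd (pinv_ptransl_some.1 ho) (h y)

lemma pblock_apply (p : M × M) (z : M) : pblock p z = pinv (ptransl p.2) (p.1 * z) := rfl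

end PartialMaps

section PartialMaps2

variable {M : Type*} [Semigroup M] [IsLeftCancelMul M]

lemma pinv_ptransl_mul (c d z : M) :
    pinv (ptransl (c * d)) z = (pinv (ptransl c) z).bind (pinv (ptransl d)) := by
  cases h1 : pinv (ptransl c) z with
  | none =>
    simp only [Option.bind_none]
    rw [pinv_ptransl_none]
    intro y hy
    rw [mul_assoc] at hy
    exact (pinv_ptransl_none.1 h1) (d * y) hy
  | some w =>
    have hcw : c * w = z := pinv_ptransl_some.1 h1
    simp only [Option.bind_some]
    refine option_ext fun y => ?_
    rw [pinv_ptransl_some, pinv_ptransl_some, ← hcw, mul_assoc]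
    exact ⟨fun h => mul_left_cancel h, fun h => by rw [h]⟩

lemma pinv_ptransl_cancel (c d z : M) :
    pinv (ptransl (c * d)) (c * z) = pinv (ptransl d) z := by
  refine option_ext fun y => ?_
  rw [pinv_ptransl_some, pinv_ptransl_some, mul_assoc]
  exact ⟨fun h => mul_left_cancel h, fun h => by rw [h]⟩

end PartialMaps2

section Words

variable {M : Type*} [Mul M]

/-- Evaluation of a word of pairs as a partial map. -/
noncomputable def evalW (l : List (M × M)) : M → Option M :=
  l.foldl (fun acc p => pcomp (pblock p) acc) pid

lemma evalW_append_single (l : List (M × M)) (p : M × M) :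
    evalW (l ++ [p]) = pcomp (pblock p) (evalW l) := by
  simp [evalW, List.foldl_append]

lemma pdom_pcomp (g f : M → Option M) : pdom (pcomp g f) ⊆ pdom f := by
  intro x hx
  simp only [pdom, pcomp, Set.mem_setOf_eq] at hx ⊢
  intro h
  rw [h] at hx
  simp at hx

lemma pdom_foldl (l : List (M × M)) (acc : M → Option M) :
    pdom (l.foldl (fun acc p => pcomp (pblock p) acc) acc) ⊆ pdom acc := by
  induction l generalizing acc with
  | nil => exact fun x hx => hx
  | cons p l ih =>
    intro x hx
    exact pdom_pcomp _ _ (ih (pcomp (pblock p) acc) hx)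

end Words

section Core

variable {S T : Type*} [Monoid S] [Monoid T] [IsLeftCancelMul S]
  [IsLeftCancelMul (Monoid.Coprod S T)]

/-- `λ_u ∘ ext g` for an `S`-partial map `g`. -/
noncomputable def lam (u : Monoid.Coprod S T) (g : S → Option S) :
    Monoid.Coprod S T → Option (Monoid.Coprod S T) :=
  fun x => (g (Shd x)).map (fun σ => u * (Monoid.Coprod.inl σ * Stl x))

/-- `b⁻¹ ∘ λ_u ∘ ext g`. -/
noncomputable def hmap (b u : Monoid.Coprod S T) (g : S → Option S) :
    Monoid.Coprod S T → Option (Monoid.Coprod S T) :=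
  fun x => (g (Shd x)).bind (fun σ => pinv (ptransl b) (u * (Monoid.Coprod.inl σ * Stl x)))

lemma lam_bind (u : Monoid.Coprod S T) (g : S → Option S) (d : Monoid.Coprod S T) :
    (fun x => (lam u g x).bind (pinv (ptransl d))) = hmap d u g := by
  funext x
  simp only [lam, hmap]
  cases hg : g (Shd x) <;> simp

lemma hmap_one (u : Monoid.Coprod S T) (g : S → Option S) : hmap 1 u g = lam u g := by
  funext x
  simp only [lam, hmap]
  cases hg : g (Shd x) with
  | none => simp
  | some σ =>
    simp only [Option.bind_some, Option.map_some]
    exact pinv_ptransl_some.2 (one_mul _)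

lemma hmap_split (c d u : Monoid.Coprod S T) (g : S → Option S) :
    hmap (c * d) u g = fun x => (hmap c u g x).bind (pinv (ptransl d)) := by
  funext x
  simp only [hmap]
  cases hg : g (Shd x) with
  | none => simp
  | some σ => simp [pinv_ptransl_mul]

lemma step_lam (p : Monoid.Coprod S T × Monoid.Coprod S T) (u : Monoid.Coprod S T)
    (g : S → Option S) :
    pcomp (pblock p) (lam u g) = hmap p.2 (p.1 * u) g := by
  funext x
  simp only [pcomp, lam, hmap]
  cases hg : g (Shd x) with
  | none => simp
  | some σ =>
    simp [pblock_apply, mul_assoc]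

lemma block_ext (b a : S) (g : S → Option S) :
    hmap (Monoid.Coprod.inl a : Monoid.Coprod S T) (Monoid.Coprod.inl b) g
      = lam 1 (pcomp (pblock (b, a)) g) := by
  funext x
  simp only [hmap, lam, pcomp]
  cases hg : g (Shd x) with
  | none => simp
  | some σ =>
    simp only [Option.bind_some, pblock_apply]
    have hZ : Monoid.Coprod.inl b * (Monoid.Coprod.inl σ * Stl x)
        = Monoid.Coprod.inl (b * σ) * Stl x := by
      rw [map_mul, mul_assoc]
    rw [hZ]
    by_cases hm : ∃ m, a * m = b * σ
    · obtain ⟨m, hm⟩ := hm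
      have h1 : pinv (ptransl (a : S)) (b * σ) = some m := pinv_ptransl_some.2 hm
      have h2 : pinv (ptransl (Monoid.Coprod.inl a : Monoid.Coprod S T))
          (Monoid.Coprod.inl (b * σ) * Stl x) = some (Monoid.Coprod.inl m * Stl x) := by
        rw [pinv_ptransl_some, ← mul_assoc, ← map_mul, hm]
      rw [h2, h1]
      simp
    · have h1 : pinv (ptransl (a : S)) (b * σ) = none :=
        pinv_ptransl_none.2 (fun m hmm => hm ⟨m, hmm⟩)
      have h2 : pinv (ptransl (Monoid.Coprod.inl a : Monoid.Coprod S T))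
          (Monoid.Coprod.inl (b * σ) * Stl x) = none := by
        rw [pinv_ptransl_none]
        intro y hy
        have hy' : Monoid.Coprod.inl (a * Shd y) * Stl y
            = Monoid.Coprod.inl (b * σ) * Stl x := by
          rw [map_mul, mul_assoc, Shd_Stl]
          exact hy
        exact hm ⟨Shd y, (canon_unique (Stl_tlead y) (Stl_tlead x) hy').1⟩
      rw [h1, h2]
      simp
lemma actS_head_div {a : S} (ha : a ≠ 1) (hnu : ∀ m : S, a * m ≠ 1) (w : List (S ⊕ T)) :
    ∃ z rest, actS a w = Sum.inl z :: rest ∧ ∃ m, a * m = z := by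
  match w with
  | [] => exact ⟨a, [], by simp [actS, ha], 1, mul_one a⟩
  | Sum.inl b :: w => exact ⟨a * b, w, by simp [actS, hnu b], b, rfl⟩
  | Sum.inr t :: w => exact ⟨a, Sum.inr t :: w, by simp [actS, ha], 1, mul_one a⟩

lemma actT_head_div {a : T} (ha : a ≠ 1) (hnu : ∀ m : T, a * m ≠ 1) (w : List (S ⊕ T)) :
    ∃ z rest, actT a w = Sum.inr z :: rest ∧ ∃ m, a * m = z := by
  match w with
  | [] => exact ⟨a, [], by simp [actT, ha], 1, mul_one a⟩
  | Sum.inr b :: w => exact ⟨a * b, w, by simp [actT, hnu b], b, rfl⟩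
  | Sum.inl t :: w => exact ⟨a, Sum.inl t :: w, by simp [actT, ha], 1, mul_one a⟩

lemma mul_eq_one_comm' {N : Type*} [Monoid N] [IsLeftCancelMul N] {u v : N}
    (h : u * v = 1) : v * u = 1 := by
  have h2 : u * (v * u) = u * 1 := by rw [← mul_assoc, h, one_mul, mul_one]
  exact mul_left_cancel h2

lemma hmap_unit {c v u : Monoid.Coprod S T} (hv : c * v = 1) (g : S → Option S) :
    hmap c u g = lam (v * u) g := by
  funext x
  simp only [hmap, lam]
  cases hg : g (Shd x) with
  | none => simp
  | some σ =>
    simp only [Option.bind_some, Option.map_some]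
    apply pinv_ptransl_some.2
    rw [mul_assoc, ← mul_assoc c v, hv, one_mul]

lemma inl_nonunit {a : S} (h : ¬∃ v : Monoid.Coprod S T, Monoid.Coprod.inl a * v = 1) :
    ∀ m : S, a * m ≠ 1 := fun m hm =>
  h ⟨Monoid.Coprod.inl m, by rw [← map_mul, hm, map_one]⟩

lemma inr_nonunit {a : T} (h : ¬∃ v : Monoid.Coprod S T, Monoid.Coprod.inr a * v = 1) :
    ∀ m : T, a * m ≠ 1 := fun m hm =>
  h ⟨Monoid.Coprod.inr m, by rw [← map_mul, hm, map_one]⟩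

lemma SL_pure (s₀ : S) (ℓ : S ⊕ T) (hℓ : IsGood ℓ) (u : Monoid.Coprod S T) (b : S)
    (hb : u = Monoid.Coprod.inl b) (G : List (S × S)) (hG : G ≠ [])
    (y₀ : Monoid.Coprod S T) (σ₀ : S)
    (hy : gen ℓ * y₀ = u * Monoid.Coprod.inl σ₀) :
    ∃ u' G', G' ≠ [] ∧ hmap (gen ℓ) u (evalW G) = lam u' (evalW G') := by
  subst hb
  match ℓ with
  | Sum.inl a =>
    refine ⟨1, G ++ [(b, a)], by simp, ?_⟩
    rw [evalW_append_single]
    exact block_ext b a (evalW G)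
  | Sum.inr τ =>
    by_cases hu : ∃ v : Monoid.Coprod S T, Monoid.Coprod.inr τ * v = 1
    · obtain ⟨v, hv⟩ := hu
      exact ⟨v * Monoid.Coprod.inl b, G, hG, hmap_unit hv (evalW G)⟩
    · exfalso
      have hτ1 : τ ≠ 1 := hℓ
      have hnu : ∀ m : T, τ * m ≠ 1 := inr_nonunit hu
      have hNF := congrArg NF hy
      obtain ⟨z, rest, hact, -⟩ := actT_head_div hτ1 hnu (NF y₀)
      rw [show gen (Sum.inr τ) = (Monoid.Coprod.inr τ : Monoid.Coprod S T) from rfl,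
        NF_inr_mul, hact, ← map_mul, NF_inl] at hNF
      split_ifs at hNF <;> simp at hNF

lemma SL (s₀ : S) (n : ℕ) : ∀ (ℓ : S ⊕ T), IsGood ℓ → ∀ (u : Monoid.Coprod S T),
    (NF u).length ≤ n → ∀ (G : List (S × S)), G ≠ [] →
    ∀ (y₀ : Monoid.Coprod S T) (σ₀ : S), evalW G s₀ = some σ₀ →
    gen ℓ * y₀ = u * Monoid.Coprod.inl σ₀ →
    ∃ u' G', G' ≠ [] ∧ hmap (gen ℓ) u (evalW G) = lam u' (evalW G') := by
  induction n with
  | zero =>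
    intro ℓ hℓ u hn G hG y₀ σ₀ hσ hy
    have hu : u = Monoid.Coprod.inl 1 := by
      rw [map_one, ← embed_NF u, List.length_eq_zero_iff.1 (Nat.le_zero.1 hn), embed_nil]
    exact SL_pure s₀ ℓ hℓ u 1 hu G hG y₀ σ₀ hy
  | succ n IH =>
    intro ℓ hℓ u hn G hG y₀ σ₀ hσ hy
    have hgood := NF_good u
    have halt := NF_alt u
    match hw : NF u with
    | [] =>
      have hu : u = Monoid.Coprod.inl 1 := by
        rw [map_one, ← embed_NF u, hw, embed_nil]
      exact SL_pure s₀ ℓ hℓ u 1 hu G hG y₀ σ₀ hy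
    | [Sum.inl b] =>
      have hu : u = Monoid.Coprod.inl b := by
        rw [← embed_NF u, hw, embed_cons, embed_nil, mul_one]
        rfl
      exact SL_pure s₀ ℓ hℓ u b hu G hG y₀ σ₀ hy
    | Sum.inl b :: c :: rest' =>
      rw [hw] at hgood halt
      have hg2 := goodW_tail hgood
      have ha2 := altW_tail halt
      set u₂ : Monoid.Coprod S T := embed (c :: rest') with hu₂def
      have hu2 : NF u₂ = c :: rest' := NF_embed hg2 ha2
      have hu : u = Monoid.Coprod.inl b * u₂ := by
        rw [← embed_NF u, hw, embed_cons]
        rfl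
      have hlen : (NF u₂).length ≤ n := by
        rw [hu2]
        have : (NF u).length = rest'.length + 2 := by rw [hw]; simp
        simp only [List.length_cons]
        omega
      match ℓ with
      | Sum.inl a =>
        by_cases hγ : ∃ γ, a * γ = b
        · obtain ⟨γ, hγ⟩ := hγ
          refine ⟨Monoid.Coprod.inl γ * u₂, G, hG, ?_⟩
          funext x
          simp only [hmap, lam]
          cases hg : evalW G (Shd x) with
          | none => simp
          | some σ =>
            simp only [Option.bind_some, Option.map_some]
            apply pinv_ptransl_some.2
            rw [hu]
            show (Monoid.Coprod.inl a : Monoid.Coprod S T) * _ = _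
            rw [← mul_assoc, ← mul_assoc, ← mul_assoc, ← map_mul, hγ, mul_assoc]
        · by_cases hδ : ∃ δ, b * δ = a
          · obtain ⟨δ, hδ⟩ := hδ
            have hδ1 : δ ≠ 1 := by
              intro h
              exact hγ ⟨1, by rw [mul_one, ← hδ, h, mul_one]⟩
            have ha_eq : (Monoid.Coprod.inl a : Monoid.Coprod S T)
                = Monoid.Coprod.inl b * Monoid.Coprod.inl δ := by
              rw [← map_mul, hδ]
            have hyn : gen (Sum.inl δ) * y₀ = u₂ * Monoid.Coprod.inl σ₀ := by
              apply mul_left_cancel (a := (Monoid.Coprod.inl b : Monoid.Coprod S T))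
              have h1 : (Monoid.Coprod.inl b : Monoid.Coprod S T)
                  * (gen (Sum.inl δ) * y₀) = gen (Sum.inl a) * y₀ := by
                show _ * ((Monoid.Coprod.inl δ : Monoid.Coprod S T) * _)
                  = (Monoid.Coprod.inl a : Monoid.Coprod S T) * _
                rw [← mul_assoc, ← map_mul, hδ]
              rw [h1, hy, hu, mul_assoc]
            have hmeq : hmap (gen (Sum.inl a)) u (evalW G)
                = hmap (gen (Sum.inl δ)) u₂ (evalW G) := by
              funext x
              simp only [hmap]
              cases hg : evalW G (Shd x) with
              | none => simp
              | some σ =>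
                simp only [Option.bind_some]
                show pinv (ptransl ((Monoid.Coprod.inl a : Monoid.Coprod S T))) _
                  = pinv (ptransl ((Monoid.Coprod.inl δ : Monoid.Coprod S T))) _
                rw [ha_eq, hu, mul_assoc, pinv_ptransl_cancel]
            rw [show gen (Sum.inl a) = (Monoid.Coprod.inl a : Monoid.Coprod S T) from rfl] at hmeq ⊢
            rw [hmeq]
            exact IH (Sum.inl δ) hδ1 u₂ hlen G hG y₀ σ₀ hσ hyn
          · exfalso
            have ha1 : a ≠ 1 := hℓ
            have hnua : ∀ m : S, a * m ≠ 1 := by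
              intro m hm
              exact hγ ⟨m * b, by rw [← mul_assoc, hm, one_mul]⟩
            have hNF := congrArg NF hy
            obtain ⟨z, rest₂, hact, m, hm⟩ := actS_head_div ha1 hnua (NF y₀)
            rw [show gen (Sum.inl a) = (Monoid.Coprod.inl a : Monoid.Coprod S T) from rfl,
              NF_inl_mul, hact, NF_mul_inl, hw, rmerge_cons_inl (by simp)] at hNF
            have hz : z = b := by
              have := (List.cons.injEq _ _ _ _ ▸ hNF).1
              exact Sum.inl.inj this
            exact hγ ⟨m, hz ▸ hm⟩
      | Sum.inr τ =>
        by_cases hu' : ∃ v : Monoid.Coprod S T, Monoid.Coprod.inr τ * v = 1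
        · obtain ⟨v, hv⟩ := hu'
          exact ⟨v * u, G, hG, hmap_unit hv (evalW G)⟩
        · exfalso
          have hτ1 : τ ≠ 1 := hℓ
          have hnu : ∀ m : T, τ * m ≠ 1 := inr_nonunit hu'
          have hNF := congrArg NF hy
          obtain ⟨z, rest₂, hact, -⟩ := actT_head_div hτ1 hnu (NF y₀)
          rw [show gen (Sum.inr τ) = (Monoid.Coprod.inr τ : Monoid.Coprod S T) from rfl,
            NF_inr_mul, hact, NF_mul_inl, hw, rmerge_cons_inl (by simp)] at hNF
          exact absurd (List.cons.injEq _ _ _ _ ▸ hNF).1 (by simp)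
    | Sum.inr t :: rest =>
      rw [hw] at hgood halt
      have hg2 := goodW_tail hgood
      have ha2 := altW_tail halt
      set u₂ : Monoid.Coprod S T := embed rest with hu₂def
      have hu2 : NF u₂ = rest := NF_embed hg2 ha2
      have hu : u = Monoid.Coprod.inr t * u₂ := by
        rw [← embed_NF u, hw, embed_cons]
        rfl
      have hlen : (NF u₂).length ≤ n := by
        rw [hu2]
        have : (NF u).length = rest.length + 1 := by rw [hw]; simp
        omega
      match ℓ with
      | Sum.inl a =>
        by_cases hu' : ∃ v : Monoid.Coprod S T, Monoid.Coprod.inl a * v = 1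
        · obtain ⟨v, hv⟩ := hu'
          exact ⟨v * u, G, hG, hmap_unit hv (evalW G)⟩
        · exfalso
          have ha1 : a ≠ 1 := hℓ
          have hnua : ∀ m : S, a * m ≠ 1 := inl_nonunit hu'
          have hNF := congrArg NF hy
          obtain ⟨z, rest₂, hact, -⟩ := actS_head_div ha1 hnua (NF y₀)
          rw [show gen (Sum.inl a) = (Monoid.Coprod.inl a : Monoid.Coprod S T) from rfl,
            NF_inl_mul, hact, NF_mul_inl, hw, rmerge_cons_inr] at hNF
          exact absurd (List.cons.injEq _ _ _ _ ▸ hNF).1 (by simp)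
      | Sum.inr τ =>
        by_cases hγ : ∃ γ, τ * γ = t
        · obtain ⟨γ, hγ⟩ := hγ
          refine ⟨Monoid.Coprod.inr γ * u₂, G, hG, ?_⟩
          funext x
          simp only [hmap, lam]
          cases hg : evalW G (Shd x) with
          | none => simp
          | some σ =>
            simp only [Option.bind_some, Option.map_some]
            apply pinv_ptransl_some.2
            rw [hu]
            show (Monoid.Coprod.inr τ : Monoid.Coprod S T) * _ = _
            rw [← mul_assoc, ← mul_assoc, ← mul_assoc, ← map_mul, hγ, mul_assoc]
        · by_cases hδ : ∃ δ, t * δ = τ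
          · obtain ⟨δ, hδ⟩ := hδ
            have hδ1 : δ ≠ 1 := by
              intro h
              exact hγ ⟨1, by rw [mul_one, ← hδ, h, mul_one]⟩
            have ha_eq : (Monoid.Coprod.inr τ : Monoid.Coprod S T)
                = Monoid.Coprod.inr t * Monoid.Coprod.inr δ := by
              rw [← map_mul, hδ]
            have hyn : gen (Sum.inr δ) * y₀ = u₂ * Monoid.Coprod.inl σ₀ := by
              apply mul_left_cancel (a := (Monoid.Coprod.inr t : Monoid.Coprod S T))
              have h1 : (Monoid.Coprod.inr t : Monoid.Coprod S T)
                  * (gen (Sum.inr δ) * y₀) = gen (Sum.inr τ) * y₀ := by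
                show _ * ((Monoid.Coprod.inr δ : Monoid.Coprod S T) * _)
                  = (Monoid.Coprod.inr τ : Monoid.Coprod S T) * _
                rw [← mul_assoc, ← map_mul, hδ]
              rw [h1, hy, hu, mul_assoc]
            have hmeq : hmap (gen (Sum.inr τ)) u (evalW G)
                = hmap (gen (Sum.inr δ)) u₂ (evalW G) := by
              funext x
              simp only [hmap]
              cases hg : evalW G (Shd x) with
              | none => simp
              | some σ =>
                simp only [Option.bind_some]
                show pinv (ptransl ((Monoid.Coprod.inr τ : Monoid.Coprod S T))) _
                  = pinv (ptransl ((Monoid.Coprod.inr δ : Monoid.Coprod S T))) _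
                rw [ha_eq, hu, mul_assoc, pinv_ptransl_cancel]
            rw [show gen (Sum.inr τ) = (Monoid.Coprod.inr τ : Monoid.Coprod S T) from rfl] at hmeq ⊢
            rw [hmeq]
            exact IH (Sum.inr δ) hδ1 u₂ hlen G hG y₀ σ₀ hσ hyn
          · exfalso
            have hτ1 : τ ≠ 1 := hℓ
            have hnuτ : ∀ m : T, τ * m ≠ 1 := by
              intro m hm
              exact hγ ⟨m * t, by rw [← mul_assoc, hm, one_mul]⟩
            have hNF := congrArg NF hy
            obtain ⟨z, rest₂, hact, m, hm⟩ := actT_head_div hτ1 hnuτ (NF y₀)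
            rw [show gen (Sum.inr τ) = (Monoid.Coprod.inr τ : Monoid.Coprod S T) from rfl,
              NF_inr_mul, hact, NF_mul_inl, hw, rmerge_cons_inr] at hNF
            have hz : z = t := by
              have := (List.cons.injEq _ _ _ _ ▸ hNF).1
              exact Sum.inr.inj this
            exact hγ ⟨m, hz ▸ hm⟩

lemma RL (s₀ : S) : ∀ (w : List (S ⊕ T)), GoodW w → AltW w →
    ∀ (u : Monoid.Coprod S T) (G : List (S × S)), G ≠ [] →
    ∀ (y₀ : Monoid.Coprod S T) (σ₀ : S), evalW G s₀ = some σ₀ →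
    embed w * y₀ = u * Monoid.Coprod.inl σ₀ →
    ∃ u' G', G' ≠ [] ∧ hmap (embed w) u (evalW G) = lam u' (evalW G') := by
  intro w
  induction w with
  | nil =>
    intro _ _ u G hG y₀ σ₀ hσ hy
    exact ⟨u, G, hG, by rw [embed_nil, hmap_one]⟩
  | cons ℓ w ihw =>
    intro hgw haw u G hG y₀ σ₀ hσ hy
    have hg' := goodW_tail hgw
    have ha' := altW_tail haw
    have hyℓ : gen ℓ * (embed w * y₀) = u * Monoid.Coprod.inl σ₀ := by
      rw [← mul_assoc, ← embed_cons]
      exact hy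
    obtain ⟨u₁, G₁, hG₁, hSL⟩ := SL s₀ (NF u).length ℓ (hgw ℓ (by simp)) u le_rfl G hG
      (embed w * y₀) σ₀ hσ hyℓ
    have hbase : hmap (gen ℓ) u (evalW G) (Monoid.Coprod.inl s₀)
        = some (embed w * y₀) := by
      simp only [hmap, Shd_inl, Stl_inl, hσ, Option.bind_some]
      apply pinv_ptransl_some.2
      rw [mul_one]
      exact hyℓ
    rw [hSL] at hbase
    obtain ⟨σ₁, hσ₁, hval⟩ : ∃ σ₁, evalW G₁ s₀ = some σ₁
        ∧ embed w * y₀ = u₁ * Monoid.Coprod.inl σ₁ := by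
      simp only [lam, Shd_inl, Stl_inl] at hbase
      cases hg1 : evalW G₁ s₀ with
      | none => rw [hg1] at hbase; simp at hbase
      | some σ₁ =>
        rw [hg1] at hbase
        simp only [Option.map_some, Option.some.injEq] at hbase
        refine ⟨σ₁, rfl, ?_⟩
        rw [← hbase, mul_one]
    obtain ⟨u₂, G₂, hG₂, hIH⟩ := ihw hg' ha' u₁ G₁ hG₁ y₀ σ₁ hσ₁ hval
    refine ⟨u₂, G₂, hG₂, ?_⟩
    have hsplit : hmap (embed (ℓ :: w)) u (evalW G)
        = fun x => (hmap (gen ℓ) u (evalW G) x).bind (pinv (ptransl (embed w))) := by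
      rw [embed_cons]
      exact hmap_split _ _ _ _
    rw [hsplit, hSL, lam_bind, hIH]

lemma MAIN (s₀ : S) : ∀ (l : List (Monoid.Coprod S T × Monoid.Coprod S T))
    (u : Monoid.Coprod S T) (G : List (S × S)), G ≠ [] →
    Monoid.Coprod.inl s₀ ∈ pdom (l.foldl (fun acc p => pcomp (pblock p) acc)
      (lam u (evalW G))) →
    ∃ u' G', G' ≠ [] ∧ l.foldl (fun acc p => pcomp (pblock p) acc) (lam u (evalW G))
      = lam u' (evalW G') := by
  intro l
  induction l with
  | nil =>
    intro u G hG _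
    exact ⟨u, G, hG, rfl⟩
  | cons p l ih =>
    intro u G hG hdom
    rw [List.foldl_cons, step_lam] at hdom ⊢
    have hdom' : Monoid.Coprod.inl s₀ ∈ pdom (hmap p.2 (p.1 * u) (evalW G)) :=
      pdom_foldl l _ hdom
    obtain ⟨y₁, hy₁⟩ : ∃ y₁, hmap p.2 (p.1 * u) (evalW G) (Monoid.Coprod.inl s₀)
        = some y₁ := Option.ne_none_iff_exists'.1 hdom'
    obtain ⟨σ₀, hσ₀, hyy⟩ : ∃ σ₀, evalW G s₀ = some σ₀
        ∧ p.2 * y₁ = p.1 * u * Monoid.Coprod.inl σ₀ := by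
      simp only [hmap, Shd_inl, Stl_inl] at hy₁
      cases hgg : evalW G s₀ with
      | none => rw [hgg] at hy₁; simp at hy₁
      | some σ =>
        rw [hgg] at hy₁
        simp only [Option.bind_some] at hy₁
        refine ⟨σ, rfl, ?_⟩
        have := pinv_ptransl_some.1 hy₁
        rw [mul_one] at this
        exact this
    obtain ⟨u₁, G₁, hG₁, hRL⟩ := RL s₀ (NF p.2) (NF_good p.2) (NF_alt p.2) (p.1 * u) G hG
      y₁ σ₀ hσ₀ (by rw [embed_NF]; exact hyy)
    rw [embed_NF] at hRL
    rw [hRL] at hdom ⊢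
    exact ih u₁ G₁ hG₁ hdom

lemma evalW_pair_one : evalW [((1 : S), (1 : S))] = (pid : S → Option S) := by
  funext s
  show (pid s).bind (pblock ((1 : S), 1)) = pid s
  simp only [pid, Option.bind_some, pblock_apply]
  exact pinv_ptransl_some.2 rfl

lemma lam_one_pid : lam 1 (pid : S → Option S) = (pid : Monoid.Coprod S T → Option (Monoid.Coprod S T)) := by
  funext x
  simp only [lam, pid, Option.map_some, one_mul, Shd_Stl]

lemma pid_eq : (pid : Monoid.Coprod S T → Option (Monoid.Coprod S T))
    = lam 1 (evalW [((1 : S), (1 : S))]) := by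
  rw [evalW_pair_one, lam_one_pid]

lemma lam_inl_absorb (u₀ : S) (G : List (S × S)) :
    lam (Monoid.Coprod.inl u₀ : Monoid.Coprod S T) (evalW G) = lam 1 (evalW (G ++ [(u₀, 1)])) := by
  rw [evalW_append_single]
  funext x
  simp only [lam, pcomp]
  cases hg : evalW G (Shd x) with
  | none => simp
  | some σ =>
    simp only [Option.map_some, Option.bind_some, pblock_apply]
    have h1 : pinv (ptransl (1 : S)) (u₀ * σ) = some (u₀ * σ) :=
      pinv_ptransl_some.2 (one_mul _)
    rw [h1]
    simp only [Option.map_some, Option.some.injEq, one_mul]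
    rw [map_mul, mul_assoc]

lemma transferW : ∀ (G : List (S × S)),
    (G.map (fun p => ((Monoid.Coprod.inl p.1 : Monoid.Coprod S T),
      (Monoid.Coprod.inl p.2 : Monoid.Coprod S T)))).foldl
        (fun acc p => pcomp (pblock p) acc) pid = lam 1 (evalW G) := by
  intro G
  induction G using List.reverseRecOn with
  | nil =>
    show pid = lam 1 (evalW ([] : List (S × S)))
    exact lam_one_pid.symm
  | append_singleton G p ih =>
    rw [List.map_append, List.foldl_append, ih]
    show pcomp (pblock _) _ = _
    rw [step_lam, mul_one, block_ext, evalW_append_single]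

lemma rmerge_eq_nil {w : List (S ⊕ T)} {σ : S} (h : rmerge w σ = []) :
    w = [] ∨ ∃ α, w = [Sum.inl α] := by
  match w with
  | [] => exact Or.inl rfl
  | [Sum.inl α] => exact Or.inr ⟨α, rfl⟩
  | [Sum.inr t] =>
    exfalso
    rw [rmerge_cons_inr] at h
    simp at h
  | Sum.inl a :: b :: w =>
    exfalso
    rw [rmerge_cons_inl (by simp)] at h
    simp at h
  | Sum.inr a :: b :: w =>
    exfalso
    rw [rmerge_cons_inr] at h
    simp at h

lemma pure_of_mul_inl_pure {u : Monoid.Coprod S T} {σ s' : S}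
    (h : u * Monoid.Coprod.inl σ = Monoid.Coprod.inl s') :
    ∃ b, u = Monoid.Coprod.inl b := by
  have hNF := congrArg NF h
  rw [NF_mul_inl, NF_inl] at hNF
  have halt := NF_alt u
  match hw : NF u with
  | [] =>
    exact ⟨1, by rw [map_one, ← embed_NF u, hw, embed_nil]⟩
  | [Sum.inl b] =>
    refine ⟨b, ?_⟩
    rw [← embed_NF u, hw, embed_cons, embed_nil, mul_one]
    rfl
  | [Sum.inr t] =>
    exfalso
    rw [hw, rmerge_cons_inr] at hNF
    split_ifs at hNF <;> simp at hNF
  | ℓ :: c :: rest =>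
    exfalso
    rw [hw] at hNF halt
    match ℓ with
    | Sum.inr t =>
      rw [rmerge_cons_inr] at hNF
      split_ifs at hNF <;> simp at hNF
    | Sum.inl b =>
      rw [rmerge_cons_inl (by simp)] at hNF
      by_cases hs' : s' = 1
      · rw [if_pos hs'] at hNF
        simp at hNF
      · rw [if_neg hs', List.cons.injEq] at hNF
        have h2 : rmerge (c :: rest) σ = [] := hNF.2
        rcases rmerge_eq_nil h2 with h3 | ⟨α, h3⟩
        · simp at h3
        · rw [List.cons.injEq] at h3
          have hc : c = Sum.inl α := h3.1
          subst hc
          have := (List.isChain_cons_cons.1 halt).1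
          simp at this

end Core



/-- For nontrivial left cancellative monoids `S`, `T` whose coproduct
is left cancellative: if `h ∈ I_ℓ(S ∗ T)` maps some element of `ι_S(S)` into `ι_S(S)`,
then `h` lies in the canonical copy of `I_ℓ(S)` inside the partial bijections of
`S ∗ T`. -/
theorem cstar_stmt10 {S T : Type*} [Monoid S] [Monoid T]
    [IsLeftCancelMul S] [IsLeftCancelMul T]
    [IsLeftCancelMul (Monoid.Coprod S T)]
    (hS : ∃ s : S, s ≠ 1) (hT : ∃ t : T, t ≠ 1)
    (h : Monoid.Coprod S T → Option (Monoid.Coprod S T))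
    (hh : InInvHull h)
    (hmap : ∃ s s' : S,
      h (Monoid.Coprod.inl s) = some (Monoid.Coprod.inl s')) :
    InInvHullOn (Set.range (⇑(Monoid.Coprod.inl : S →* Monoid.Coprod S T))) h := by
  obtain ⟨l, hl, rfl⟩ := hh
  obtain ⟨s, s', hss⟩ := hmap
  have hfold : l.foldl (fun acc p => pcomp (pblock p) acc) pid
      = l.foldl (fun acc p => pcomp (pblock p) acc) (lam 1 (evalW [((1 : S), (1 : S))])) := by
    rw [← pid_eq]
  have hdom : Monoid.Coprod.inl s ∈ pdom (l.foldl (fun acc p => pcomp (pblock p) acc)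
      (lam 1 (evalW [((1 : S), (1 : S))]))) := by
    rw [← pid_eq]
    show _ ≠ none
    rw [hss]
    simp
  obtain ⟨u', G', hG', heq⟩ := MAIN s l 1 [((1 : S), (1 : S))] (by simp) hdom
  have heq2 : l.foldl (fun acc p => pcomp (pblock p) acc) pid = lam u' (evalW G') :=
    hfold.trans heq
  have hval : lam u' (evalW G') (Monoid.Coprod.inl s) = some (Monoid.Coprod.inl s') := by
    rw [← heq2]
    exact hss
  obtain ⟨σ', hσ', hval2⟩ : ∃ σ', evalW G' s = some σ'
      ∧ (Monoid.Coprod.inl s' : Monoid.Coprod S T) = u' * (Monoid.Coprod.inl σ' * 1) := by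
    simp only [lam, Shd_inl, Stl_inl] at hval
    cases hgg : evalW G' s with
    | none => rw [hgg] at hval; simp at hval
    | some σ' =>
      rw [hgg] at hval
      simp only [Option.map_some, Option.some.injEq] at hval
      exact ⟨σ', rfl, hval.symm⟩
  rw [mul_one] at hval2
  obtain ⟨u₀, rfl⟩ := pure_of_mul_inl_pure hval2.symm
  refine ⟨(G' ++ [(u₀, 1)]).map (fun p : S × S => ((Monoid.Coprod.inl p.1 : Monoid.Coprod S T),
    (Monoid.Coprod.inl p.2 : Monoid.Coprod S T))), by simp, ?_, ?_⟩
  · intro p hp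
    simp only [List.mem_map] at hp
    obtain ⟨q, -, rfl⟩ := hp
    exact ⟨⟨q.1, rfl⟩, ⟨q.2, rfl⟩⟩
  · rw [heq2, lam_inl_absorb, ← transferW]

end SgC
end
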